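/- arXiv:1110.3200 — 13 statements merged into one kernel-verified Lean document; each statement's English description precedes it below -/
import Mathlib

section
/- Let G be a linearly ordered abelian group, n ∈ ℕ, and a ∈ G with a ∉ nG. Then the union H₀ of all convex subgroups H of G satisfying a ∉ H + nG is itself a convex subgroup of G with a ∉ H₀ + nG; in other words, there exists a largest convex subgroup H of G such that a ∉ H + nG. -/
open Pointwise

/-- The set `nG = {n·g : g ∈ G}`. -/
def NG (G : Type*) [AddCommGroup G] (n : ℕ) : Set G :=
  {x : G | ∃ g : G, n • g = x}

/-- `H` is a convex subgroup of the linearly ordered abelian group `G`. -/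
def IsConvexSubgroup {G : Type*} [AddCommGroup G] [LinearOrder G] [IsOrderedAddMonoid G] (H : Set G) : Prop :=
  (0 : G) ∈ H ∧ (∀ x ∈ H, ∀ y ∈ H, x + y ∈ H) ∧ (∀ x ∈ H, -x ∈ H) ∧
    ∀ a ∈ H, ∀ b : G, 0 ≤ b → b ≤ a → b ∈ H

lemma abs_mem_of_mem {G : Type*} [AddCommGroup G] [LinearOrder G] [IsOrderedAddMonoid G] {H : Set G}
    (hH : IsConvexSubgroup H) {x : G} (hx : x ∈ H) : |x| ∈ H := by
  rcases abs_choice x with h | h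
  · rwa [h]
  · rw [h]; exact hH.2.2.1 x hx

lemma mem_of_abs_mem {G : Type*} [AddCommGroup G] [LinearOrder G] [IsOrderedAddMonoid G] {H : Set G}
    (hH : IsConvexSubgroup H) {x : G} (hx : |x| ∈ H) : x ∈ H := by
  rcases abs_choice x with h | h
  · rwa [h] at hx
  · have := hH.2.2.1 _ hx
    rwa [h, neg_neg] at this

lemma convex_chain {G : Type*} [AddCommGroup G] [LinearOrder G] [IsOrderedAddMonoid G] {H K : Set G}
    (hH : IsConvexSubgroup H) (hK : IsConvexSubgroup K) : H ⊆ K ∨ K ⊆ H := by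
  by_cases h : H ⊆ K
  · exact Or.inl h
  · right
    rcases Set.not_subset.mp h with ⟨x, hxH, hxK⟩
    intro y hyK
    have hxa : |x| ∈ H := abs_mem_of_mem hH hxH
    have hlt : |y| < |x| := by
      by_contra hle
      push_neg at hle
      exact hxK (mem_of_abs_mem hK (hK.2.2.2 _ (abs_mem_of_mem hK hyK) _ (abs_nonneg x) hle))
    exact mem_of_abs_mem hH (hH.2.2.2 _ hxa _ (abs_nonneg y) hlt.le)

/-- For `a ∉ nG`, the union `H₀` of all convex subgroups `H` with
`a ∉ H + nG` is itself a convex subgroup satisfying `a ∉ H₀ + nG`; since it clearly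
contains every such subgroup, it is the largest convex subgroup with this property. -/
theorem largest_convex_subgroup_avoiding {G : Type*} [AddCommGroup G] [LinearOrder G] [IsOrderedAddMonoid G]
    (n : ℕ) (a : G) (ha : a ∉ NG G n) :
    IsConvexSubgroup (⋃₀ {H : Set G | IsConvexSubgroup H ∧ a ∉ H + NG G n}) ∧
    a ∉ (⋃₀ {H : Set G | IsConvexSubgroup H ∧ a ∉ H + NG G n}) + NG G n ∧
    ∀ H : Set G, IsConvexSubgroup H → a ∉ H + NG G n →
      H ⊆ ⋃₀ {H : Set G | IsConvexSubgroup H ∧ a ∉ H + NG G n} := by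
  set S : Set (Set G) := {H : Set G | IsConvexSubgroup H ∧ a ∉ H + NG G n} with hS
  have hzero : ({0} : Set G) ∈ S := by
    constructor
    · refine ⟨rfl, ?_, ?_, ?_⟩
      · rintro x rfl y rfl; simp
      · rintro x rfl; simp
      · rintro x rfl b hb hb'; exact Set.mem_singleton_iff.mpr (le_antisymm hb' hb)
    · intro h
      rcases Set.mem_add.mp h with ⟨x, hx, y, hy, hxy⟩
      rcases hx with rfl
      rcases hy with ⟨g, rfl⟩
      exact ha ⟨g, by simpa using hxy⟩
  refine ⟨⟨?_, ?_, ?_, ?_⟩, ?_, ?_⟩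
  · exact ⟨{0}, hzero, rfl⟩
  · rintro x ⟨H, hHS, hxH⟩ y ⟨K, hKS, hyK⟩
    rcases convex_chain hHS.1 hKS.1 with hsub | hsub
    · exact ⟨K, hKS, hKS.1.2.1 x (hsub hxH) y hyK⟩
    · exact ⟨H, hHS, hHS.1.2.1 x hxH y (hsub hyK)⟩
  · rintro x ⟨H, hHS, hxH⟩
    exact ⟨H, hHS, hHS.1.2.2.1 x hxH⟩
  · rintro x ⟨H, hHS, hxH⟩ b hb hb'
    exact ⟨H, hHS, hHS.1.2.2.2 x hxH b hb hb'⟩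
  · intro h
    rcases Set.mem_add.mp h with ⟨x, hx, y, hy, hxy⟩
    rcases hx with ⟨H, hHS, hxH⟩
    exact hHS.2 (Set.mem_add.mpr ⟨x, hxH, y, hy, hxy⟩)
  · intro H hH hHa x hx
    exact ⟨H, ⟨hH, hHa⟩, hx⟩
end

section
/- Let G be a linearly ordered abelian group, n ∈ ℕ, and b ∈ G. Let ⟨b⟩^conv denote the smallest convex subgroup of G containing b, and let |b| = max(b, −b). Then, as subsets of G, ⟨b⟩^conv + nG = [0, n|b|] + nG, where [0, n|b|] = {y ∈ G : 0 ≤ y ≤ n|b|}. -/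
open Pointwise

/-- `⟨b⟩^conv`: the smallest convex subgroup of `G` containing `b`. -/
def convGen {G : Type*} [AddCommGroup G] [LinearOrder G] [IsOrderedAddMonoid G] (b : G) : Set G :=
  ⋂₀ {H : Set G | IsConvexSubgroup H ∧ b ∈ H}

/-- The set of elements absolutely bounded by a multiple of `|b|` is a convex
subgroup containing `b`. -/
lemma isConvexSubgroup_bdd {G : Type*} [AddCommGroup G] [LinearOrder G] [IsOrderedAddMonoid G] (b : G) :
    IsConvexSubgroup {x : G | ∃ k : ℕ, |x| ≤ k • |b|} ∧
      b ∈ {x : G | ∃ k : ℕ, |x| ≤ k • |b|} := by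
  refine ⟨⟨⟨0, by simp⟩, ?_, ?_, ?_⟩, ⟨1, by simp⟩⟩
  · rintro x ⟨k, hk⟩ y ⟨l, hl⟩
    exact ⟨k + l, (abs_add_le x y).trans (by rw [add_nsmul]; exact add_le_add hk hl)⟩
  · rintro x ⟨k, hk⟩
    exact ⟨k, by rwa [abs_neg]⟩
  · rintro a ⟨k, hk⟩ c hc0 hca
    exact ⟨k, by rw [abs_of_nonneg hc0]; exact hca.trans ((le_abs_self a).trans hk)⟩

lemma mem_convGen_of_le {G : Type*} [AddCommGroup G] [LinearOrder G] [IsOrderedAddMonoid G] (n : ℕ) (b : G)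
    {y : G} (hy0 : 0 ≤ y) (hy : y ≤ n • |b|) : y ∈ convGen b := by
  rintro H ⟨⟨h0, hadd, hneg, hconv⟩, hb⟩
  have habs : |b| ∈ H := by
    rcases abs_choice b with h | h
    · rwa [h]
    · rw [h]; exact hneg b hb
  have hnb : ∀ m : ℕ, m • |b| ∈ H := by
    intro m
    induction m with
    | zero => simpa using h0
    | succ m ih => rw [succ_nsmul]; exact hadd _ ih _ habs
  exact hconv _ (hnb n) y hy0 hy

/-- `⟨b⟩^conv + nG = [0, n|b|] + nG`. -/
theorem convGen_add_eq_Icc_add {G : Type*} [AddCommGroup G] [LinearOrder G] [IsOrderedAddMonoid G]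
    (n : ℕ) (hn : 0 < n) (b : G) :
    convGen b + NG G n = Set.Icc (0 : G) (n • |b|) + NG G n := by
  ext x
  constructor
  · rintro ⟨u, hu, -, ⟨g, rfl⟩, rfl⟩
    obtain ⟨k, hk⟩ : ∃ k : ℕ, |u| ≤ k • |b| := hu _ (isConvexSubgroup_bdd b)
    set c : G := n • |b| with hc
    have hc0 : 0 ≤ c := nsmul_nonneg (abs_nonneg b) n
    rcases eq_or_lt_of_le hc0 with hceq | hcpos
    · -- then |b| = 0 hence u = 0
      have hbc : |b| ≤ c := by
        rw [hc]
        calc |b| = 1 • |b| := (one_nsmul _).symm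
        _ ≤ n • |b| := nsmul_le_nsmul_left (abs_nonneg b) hn
      have hb0 : |b| = 0 :=
        le_antisymm (hbc.trans hceq.ge) (abs_nonneg b)
      have hu0 : u = 0 := by
        have : |u| ≤ 0 := hk.trans (by rw [hb0, smul_zero])
        exact abs_eq_zero.mp (le_antisymm this (abs_nonneg u))
      exact ⟨0, ⟨le_refl 0, hc0⟩, n • g, ⟨g, rfl⟩, by simp [hu0]⟩
    · -- c > 0; take the greatest m : ℤ with m • c ≤ u
      have hbc : |b| ≤ c := by
        rw [hc]
        calc |b| = 1 • |b| := (one_nsmul _).symm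
        _ ≤ n • |b| := nsmul_le_nsmul_left (abs_nonneg b) hn
      have hbdd : ∀ z : ℤ, z • c ≤ u → z ≤ (k : ℤ) := by
        intro z hz
        have h1 : z • c ≤ (k : ℤ) • c := by
          refine hz.trans ((le_abs_self u).trans (hk.trans ?_))
          rw [natCast_zsmul]
          exact nsmul_le_nsmul_right hbc k
        exact (zsmul_le_zsmul_iff_left hcpos).mp h1
      have hne : (-(k : ℤ)) • c ≤ u := by
        have h1 : (k : ℤ) • c = k • c := natCast_zsmul c k
        have h2 : k • |b| ≤ k • c := nsmul_le_nsmul_right hbc k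
        have : -((k:ℤ) • c) ≤ -|u| := by
          rw [h1, neg_le_neg_iff]
          exact hk.trans h2
        calc (-(k : ℤ)) • c = -((k:ℤ) • c) := neg_zsmul c _
        _ ≤ -|u| := this
        _ ≤ u := neg_abs_le u
      obtain ⟨m, hm, hmax⟩ := Int.exists_greatest_of_bdd ⟨(k : ℤ), hbdd⟩ ⟨-(k:ℤ), hne⟩
      set y : G := u - m • c with hy
      have hy0 : 0 ≤ y := by rw [hy]; exact sub_nonneg.mpr hm
      have hyc : y ≤ c := by
        by_contra h
        push_neg at h
        have : (m + 1) • c ≤ u := by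
          rw [add_zsmul, one_zsmul]
          rw [hy] at h
          exact le_sub_iff_add_le'.mp h.le
        have := hmax _ this
        omega
      refine ⟨y, ⟨hy0, hyc⟩, n • (m • |b| + g), ⟨m • |b| + g, rfl⟩, ?_⟩
      have hcomm : n • (m • |b|) = m • c := by
        rw [hc, ← natCast_zsmul ((m : ℤ) • |b|) n, ← natCast_zsmul (|b|) n,
          smul_comm]
      rw [smul_add, hcomm, hy]
      abel_nf
  · rintro ⟨y, hy, -, ⟨g, rfl⟩, rfl⟩
    exact ⟨y, mem_convGen_of_le n b hy.1 hy.2, n • g, ⟨g, rfl⟩, rfl⟩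
end

section
/- Let G be a linearly ordered abelian group, H ⊆ G a convex subgroup, m, n ∈ ℕ with m ∣ n, and a ∈ G. Then a ∈ H + mG if and only if (n/m)·a ∈ H + nG. -/
open Pointwise

private lemma smul_mem_aux {G : Type*} [AddCommGroup G] [LinearOrder G] [IsOrderedAddMonoid G]
    {H : Set G} (hH : IsConvexSubgroup H) (k : ℕ) {h : G} (hh : h ∈ H) : k • h ∈ H := by
  induction k with
  | zero => simpa using hH.1
  | succ k ih =>
    rw [succ_nsmul]
    exact hH.2.1 _ ih _ hh

private lemma mem_of_smul_mem {G : Type*} [AddCommGroup G] [LinearOrder G] [IsOrderedAddMonoid G]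
    {H : Set G} (hH : IsConvexSubgroup H) {k : ℕ} (hk : 0 < k) {x : G}
    (hx : k • x ∈ H) : x ∈ H := by
  obtain ⟨h0, hadd, hneg, hconv⟩ := hH
  have habs : |k • x| ∈ H := by
    rcases abs_choice (k • x) with h | h
    · rwa [h]
    · rw [h]; exact hneg _ hx
  have h1 : |x| ∈ H := by
    refine hconv _ habs _ (abs_nonneg x) ?_
    rw [abs_nsmul]
    calc |x| = 1 • |x| := (one_nsmul _).symm
    _ ≤ k • |x| := nsmul_le_nsmul_left (abs_nonneg x) hk
  rcases abs_choice x with h | h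
  · rw [← h]; exact h1
  · have := hneg _ h1
    rwa [h, neg_neg] at this

/-- For a convex subgroup `H`, positive naturals `m ∣ n`, and `a ∈ G`:
`a ∈ H + mG ↔ (n/m)·a ∈ H + nG`. -/
theorem mem_add_iff_div_smul_mem {G : Type*} [AddCommGroup G] [LinearOrder G] [IsOrderedAddMonoid G]
    (H : Set G) (hH : IsConvexSubgroup H) (m n : ℕ) (hm : 0 < m) (hn : 0 < n)
    (hmn : m ∣ n) (a : G) :
    a ∈ H + NG G m ↔ (n / m) • a ∈ H + NG G n := by
  obtain ⟨k, rfl⟩ := hmn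
  have hk : 0 < k := Nat.pos_of_ne_zero (by rintro rfl; simp at hn)
  have hdiv : m * k / m = k := Nat.mul_div_cancel_left k hm
  rw [hdiv]
  constructor
  · rintro ⟨h, hh, x, ⟨g, rfl⟩, rfl⟩
    refine ⟨k • h, smul_mem_aux hH k hh, (m * k) • g, ⟨g, rfl⟩, ?_⟩
    rw [smul_add, smul_smul, Nat.mul_comm]
  · rintro ⟨h, hh, x, ⟨g, rfl⟩, heq⟩
    have heq' : h + (m * k) • g = k • a := heq
    refine ⟨a - m • g, ?_, m • g, ⟨g, rfl⟩, sub_add_cancel a (m • g)⟩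
    apply mem_of_smul_mem hH hk
    have : k • (a - m • g) = h := by
      rw [smul_sub, smul_smul, Nat.mul_comm, ← heq']; abel
    rwa [this]
end

section
/- Let G be a linearly ordered abelian group and n ∈ ℕ with n ≥ 2. Then the following two sets of convex subgroups of G are equal: {H_{n,a} : a ∈ G} = ⋃_{p prime, p ∣ n} {H_{p,a} : a ∈ G}. -/
open Pointwise

/-- `H_{n,a}`: the largest convex subgroup `H` with `a ∉ H + nG` (it is the union of
all such subgroups), and `{0}` if `a ∈ nG` (in which case the union is empty). -/
def Hna {G : Type*} [AddCommGroup G] [LinearOrder G] [IsOrderedAddMonoid G] (n : ℕ) (a : G) : Set G :=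
  {0} ∪ ⋃₀ {H : Set G | IsConvexSubgroup H ∧ a ∉ H + NG G n}

/-- `H'_{n,b} = ⋃ {H_{n,a} : a ∈ G, b ∉ H_{n,a}}`, with `{0}` for the empty union. -/
def Hnb' {G : Type*} [AddCommGroup G] [LinearOrder G] [IsOrderedAddMonoid G] (n : ℕ) (b : G) : Set G :=
  {0} ∪ ⋃₀ {H : Set G | ∃ a : G, H = Hna n a ∧ b ∉ Hna n a}

/-- `G^{[n]}_C = ⋂ {H + nG : H convex subgroup, H ⊋ C}`, with `G` for the empty
intersection. -/
def Gbr {G : Type*} [AddCommGroup G] [LinearOrder G] [IsOrderedAddMonoid G] (C : Set G) (n : ℕ) : Set G :=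
  ⋂₀ {S : Set G | ∃ H : Set G, IsConvexSubgroup H ∧ C ⊂ H ∧ S = H + NG G n}


section Aux
variable {G : Type*} [AddCommGroup G] [LinearOrder G] [IsOrderedAddMonoid G]

lemma conv_nsmul_mem {H : Set G} (hH : IsConvexSubgroup H) {x : G} (hx : x ∈ H) :
    ∀ k : ℕ, k • x ∈ H
  | 0 => by simpa using hH.1
  | (k+1) => by
      rw [succ_nsmul]
      exact hH.2.1 _ (conv_nsmul_mem hH hx k) _ hx

lemma conv_pure {H : Set G} (hH : IsConvexSubgroup H) {x : G} {k : ℕ} (hk : 1 ≤ k)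
    (hx : k • x ∈ H) : x ∈ H := by
  obtain ⟨h0, hadd, hneg, hconv⟩ := hH
  rcases le_total 0 x with h | h
  · refine hconv _ hx x h ?_
    calc x = 1 • x := (one_nsmul x).symm
    _ ≤ k • x := nsmul_le_nsmul_left h hk
  · have hx' : k • (-x) ∈ H := by rw [smul_neg]; exact hneg _ hx
    have : -x ∈ H := by
      refine hconv _ hx' (-x) (by simpa using h) ?_
      calc -x = 1 • (-x) := (one_nsmul _).symm
      _ ≤ k • (-x) := nsmul_le_nsmul_left (by simpa using h) hk
    simpa using hneg _ this

lemma conv_abs_mem {H : Set G} (hH : IsConvexSubgroup H) {x : G} (hx : x ∈ H) : |x| ∈ H := by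
  rcases abs_choice x with h | h
  · rwa [h]
  · rw [h]; exact hH.2.2.1 _ hx

lemma conv_mem_of_abs {H : Set G} (hH : IsConvexSubgroup H) {x : G} (hx : |x| ∈ H) : x ∈ H := by
  rcases abs_choice x with h | h
  · rwa [← h]
  · have := hH.2.2.1 _ hx
    rwa [h, neg_neg] at this

lemma conv_chain {H₁ H₂ : Set G} (h1 : IsConvexSubgroup H₁) (h2 : IsConvexSubgroup H₂) :
    H₁ ⊆ H₂ ∨ H₂ ⊆ H₁ := by
  by_cases h : H₁ ⊆ H₂
  · exact Or.inl h
  · right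
    obtain ⟨x, hx1, hx2⟩ := Set.not_subset.mp h
    have ha1 : |x| ∈ H₁ := conv_abs_mem h1 hx1
    have ha2 : |x| ∉ H₂ := fun hc => hx2 (conv_mem_of_abs h2 hc)
    intro y hy
    rcases le_total |y| |x| with hle | hle
    · exact conv_mem_of_abs h1 (h1.2.2.2 _ ha1 _ (abs_nonneg y) hle)
    · exact absurd (h2.2.2.2 _ (conv_abs_mem h2 hy) _ (abs_nonneg x) hle) ha2

lemma zero_isConvex : IsConvexSubgroup ({0} : Set G) := by
  refine ⟨rfl, by simp, by simp, ?_⟩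
  intro a ha b hb1 hb2
  simp only [Set.mem_singleton_iff] at ha ⊢
  subst ha
  exact le_antisymm hb2 hb1

lemma Hna_isConvex (n : ℕ) (a : G) : IsConvexSubgroup (Hna n a) := by
  refine ⟨Or.inl rfl, ?_, ?_, ?_⟩
  · rintro x (hx | ⟨H₁, hH₁, hx⟩) y hy
    · simp only [Set.mem_singleton_iff] at hx; subst hx; simpa using hy
    rcases hy with hy | ⟨H₂, hH₂, hy⟩
    · simp only [Set.mem_singleton_iff] at hy; subst hy; right; exact ⟨H₁, hH₁, by simpa using hx⟩
    rcases conv_chain hH₁.1 hH₂.1 with h | h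
    · exact Or.inr ⟨H₂, hH₂, hH₂.1.2.1 _ (h hx) _ hy⟩
    · exact Or.inr ⟨H₁, hH₁, hH₁.1.2.1 _ hx _ (h hy)⟩
  · rintro x (hx | ⟨H₁, hH₁, hx⟩)
    · simp only [Set.mem_singleton_iff] at hx; subst hx; left; simp
    · exact Or.inr ⟨H₁, hH₁, hH₁.1.2.2.1 _ hx⟩
  · rintro x (hx | ⟨H₁, hH₁, hx⟩) b hb1 hb2
    · simp only [Set.mem_singleton_iff] at hx; subst hx
      left; exact le_antisymm hb2 hb1
    · exact Or.inr ⟨H₁, hH₁, hH₁.1.2.2.2 _ hx _ hb1 hb2⟩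

lemma Hna_spec {n : ℕ} {a : G} (ha : a ∉ NG G n) : a ∉ Hna n a + NG G n := by
  intro hc
  rw [Set.mem_add] at hc
  obtain ⟨h, hh, g, hg, heq⟩ := hc
  rcases hh with h0 | ⟨H, hHf, hhH⟩
  · simp only [Set.mem_singleton_iff] at h0; subst h0
    rw [zero_add] at heq; subst heq; exact ha hg
  · exact hHf.2 (Set.mem_add.mpr ⟨h, hhH, g, hg, heq⟩)

lemma Hna_max {n : ℕ} {a : G} {H : Set G} (hH : IsConvexSubgroup H) (ha : a ∉ H + NG G n) :
    H ⊆ Hna n a := fun x hx => Or.inr ⟨H, ⟨hH, ha⟩, hx⟩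

lemma Hna_eq_of {n : ℕ} {a : G} {C : Set G} (hC : IsConvexSubgroup C)
    (h1 : a ∉ C + NG G n)
    (h2 : ∀ H : Set G, IsConvexSubgroup H → a ∉ H + NG G n → H ⊆ C) : Hna n a = C := by
  refine subset_antisymm ?_ (Hna_max hC h1)
  rintro x (hx | ⟨H, hHf, hx⟩)
  · simp only [Set.mem_singleton_iff] at hx; subst hx; exact hC.1
  · exact h2 H hHf.1 hHf.2 hx

lemma Hna_of_mem {n : ℕ} {a : G} (ha : a ∈ NG G n) : Hna n a = {0} := by
  have : {H : Set G | IsConvexSubgroup H ∧ a ∉ H + NG G n} = ∅ := by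
    ext H
    simp only [Set.mem_setOf_eq, Set.mem_empty_iff_false, iff_false, not_and, not_not]
    intro hH
    exact Set.mem_add.mpr ⟨0, hH.1, a, ha, zero_add a⟩
  rw [Hna, this, Set.sUnion_empty, Set.union_empty]

lemma NG_anti {p n : ℕ} (h : p ∣ n) : NG G n ⊆ NG G p := by
  obtain ⟨m, rfl⟩ := h
  rintro x ⟨g, rfl⟩
  exact ⟨m • g, (mul_nsmul' g p m).symm⟩

lemma mem_add_NG_iff {H : Set G} (hH : IsConvexSubgroup H) {p m : ℕ} (hm : 1 ≤ m) (a : G) :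
    a ∈ H + NG G p ↔ m • a ∈ H + NG G (p * m) := by
  constructor
  · rintro ⟨h, hh, _, ⟨g, rfl⟩, heq⟩
    refine Set.mem_add.mpr ⟨m • h, conv_nsmul_mem hH hh m, (p * m) • g, ⟨g, rfl⟩, ?_⟩
    have heq' : h + p • g = a := heq
    rw [← heq', smul_add, mul_comm p m, mul_nsmul' g m p]
  · rintro ⟨h, hh, _, ⟨g, rfl⟩, heq⟩
    have key : m • (a - p • g) = h := by
      have heq' : h + m • p • g = m • a := by
        rw [← heq, mul_comm p m, mul_nsmul' g m p]
      rw [smul_sub, ← heq', add_sub_cancel_right]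
    have : a - p • g ∈ H := conv_pure hH hm (key ▸ hh)
    exact Set.mem_add.mpr ⟨a - p • g, this, p • g, ⟨g, rfl⟩, sub_add_cancel a (p • g)⟩

lemma Hna_prime_div {p m n : ℕ} (hnm : n = p * m) (hm : 1 ≤ m) (a : G) :
    Hna p a = Hna n (m • a) := by
  subst hnm
  have hset : {H : Set G | IsConvexSubgroup H ∧ a ∉ H + NG G p} =
      {H : Set G | IsConvexSubgroup H ∧ m • a ∉ H + NG G (p * m)} := by
    ext H
    exact and_congr_right fun hH => not_congr (mem_add_NG_iff hH hm a)
  rw [Hna, Hna, hset]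

lemma key_exists : ∀ n : ℕ, 2 ≤ n → ∀ a : G,
    ∃ p : ℕ, ∃ b : G, p.Prime ∧ p ∣ n ∧ Hna n a = Hna p b := by
  intro n
  induction n using Nat.strong_induction_on with
  | _ n ih =>
    intro hn a
    have hpp : n.minFac.Prime := Nat.minFac_prime (by omega)
    have hpd : n.minFac ∣ n := Nat.minFac_dvd n
    set p := n.minFac with hp
    by_cases hmem : a ∈ NG G n
    · exact ⟨p, 0, hpp, hpd, by rw [Hna_of_mem hmem, Hna_of_mem ⟨0, smul_zero p⟩]⟩
    · have hCc := Hna_isConvex n a (G := G)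
      have hCa := Hna_spec hmem
      by_cases hpa : a ∈ Hna n a + NG G p
      · -- case B : a = c + p • b
        obtain ⟨m, hnm⟩ := hpd
        obtain ⟨c, hc, _, ⟨b, rfl⟩, heq⟩ := Set.mem_add.mp hpa
        have hm2 : 2 ≤ m := by
          by_contra h
          interval_cases m
          · omega
          · rw [mul_one] at hnm
            rw [← hnm] at hpa
            exact hCa hpa
        have hmn : m < n := by
          have h2 : 2 ≤ p := hpp.two_le
          have hle : 2 * m ≤ p * m := Nat.mul_le_mul h2 le_rfl
          omega
        have hbC : b ∉ Hna n a + NG G m := by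
          intro hmem
          obtain ⟨c', hc', _, ⟨g, rfl⟩, heq'⟩ := Set.mem_add.mp hmem
          apply hCa
          refine Set.mem_add.mpr ⟨c + p • c', hCc.2.1 _ hc _ (conv_nsmul_mem hCc hc' p), n • g, ⟨g, rfl⟩, ?_⟩
          rw [← heq, ← heq', hnm]
          rw [smul_add, mul_nsmul, smul_comm m p g]
          abel
        have hmax : ∀ H : Set G, IsConvexSubgroup H → b ∉ H + NG G m → H ⊆ Hna n a := by
          intro H hH hbH
          rcases conv_chain hH hCc with h | h
          · exact h
          · refine Hna_max hH ?_
            intro hmem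
            obtain ⟨h', hh', _, ⟨g, rfl⟩, heq2⟩ := Set.mem_add.mp hmem
            apply hbH
            have hthis : c + p • b = h' + (p * m) • g := by rw [heq, ← hnm]; exact heq2.symm
            have hkey : p • (b - m • g) = h' - c := by
              rw [smul_sub, ← mul_nsmul' g p m, sub_eq_sub_iff_add_eq_add, add_comm (p • b) c]
              exact hthis
            have hsub : h' - c ∈ H := by
              rw [sub_eq_add_neg]
              exact hH.2.1 _ hh' _ (hH.2.2.1 _ (h hc))
            have hbm : b - m • g ∈ H :=
              conv_pure hH hpp.one_lt.le (by rw [hkey]; exact hsub)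
            exact Set.mem_add.mpr ⟨b - m • g, hbm, m • g, ⟨g, rfl⟩, sub_add_cancel b (m • g)⟩
        have hCeq : Hna m b = Hna n a := Hna_eq_of hCc hbC hmax
        obtain ⟨q, c', hq, hqd, hEq⟩ := ih m hmn hm2 b
        exact ⟨q, c', hq, hqd.trans ⟨p, by rw [hnm, mul_comm]⟩, by rw [← hCeq, hEq]⟩
      · refine ⟨p, a, hpp, hpd, ?_⟩
        refine (Hna_eq_of hCc hpa ?_).symm
        intro H hH haH
        refine Hna_max hH fun hc => haH ?_
        obtain ⟨h, hh, g, hg, heq⟩ := Set.mem_add.mp hc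
        exact Set.mem_add.mpr ⟨h, hh, g, NG_anti hpd hg, heq⟩

end Aux

/-- For `n ≥ 2`, the set of convex subgroups of the form `H_{n,a}`
equals the union over prime divisors `p` of `n` of the sets of subgroups `H_{p,a}`. -/
theorem Hna_range_eq_union_primes {G : Type*} [AddCommGroup G] [LinearOrder G] [IsOrderedAddMonoid G]
    (n : ℕ) (hn : 2 ≤ n) :
    {H : Set G | ∃ a : G, H = Hna n a} =
      ⋃ p ∈ {p : ℕ | p.Prime ∧ p ∣ n}, {H : Set G | ∃ a : G, H = Hna p a} := by
  ext H
  simp only [Set.mem_setOf_eq, Set.mem_iUnion, exists_prop]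
  constructor
  · rintro ⟨a, rfl⟩
    obtain ⟨p, b, hp, hpd, hEq⟩ := key_exists n hn a
    exact ⟨p, ⟨hp, hpd⟩, b, hEq⟩
  · rintro ⟨p, ⟨hp, hpd⟩, a, rfl⟩
    obtain ⟨m, hnm⟩ := hpd
    have hm : 1 ≤ m := by
      rcases Nat.eq_zero_or_pos m with h | h
      · subst h; simp at hnm; omega
      · exact h
    exact ⟨m • a, Hna_prime_div hnm hm a⟩
end

section
/- Let G be a linearly ordered abelian group, n ∈ ℕ with n ≥ 2, and a ∈ G. Then H_{n,a} = ⋃_{p^r ∥ n} H_{p^r,a}, where the union is over all pairs (p, r) with p prime, r ∈ ℕ, p^r ∣ n and p^{r+1} ∤ n. -/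
open Pointwise

lemma mem_add_NG_iff_s5 {G : Type*} [AddCommGroup G] (H : Set G) (n : ℕ) (a : G) :
    a ∈ H + NG G n ↔ ∃ h ∈ H, ∃ g : G, h + n • g = a := by
  simp only [Set.mem_add, NG, Set.mem_setOf_eq]
  constructor
  · rintro ⟨h, hh, y, ⟨g, rfl⟩, rfl⟩; exact ⟨h, hh, g, rfl⟩
  · rintro ⟨h, hh, g, rfl⟩; exact ⟨h, hh, n • g, ⟨g, rfl⟩, rfl⟩

lemma NG_subset {G : Type*} [AddCommGroup G] {m n : ℕ} (h : m ∣ n) :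
    NG G n ⊆ NG G m := by
  obtain ⟨k, rfl⟩ := h
  rintro x ⟨g, rfl⟩
  exact ⟨k • g, by rw [← mul_smul]⟩

lemma zsmul_mem' {G : Type*} [AddCommGroup G] {H : Set G} (h0 : (0:G) ∈ H)
    (hadd : ∀ x ∈ H, ∀ y ∈ H, x + y ∈ H) (hneg : ∀ x ∈ H, -x ∈ H)
    (k : ℤ) {x : G} (hx : x ∈ H) : k • x ∈ H := by
  induction k using Int.induction_on with
  | zero => simpa
  | succ n ih => rw [add_smul, one_smul]; exact hadd _ ih _ hx
  | pred n ih => rw [sub_smul, one_smul, sub_eq_add_neg]; exact hadd _ ih _ (hneg _ hx)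

lemma coprime_step {G : Type*} [AddCommGroup G] {H : Set G} (h0 : (0:G) ∈ H)
    (hadd : ∀ x ∈ H, ∀ y ∈ H, x + y ∈ H) (hneg : ∀ x ∈ H, -x ∈ H)
    {s t : ℕ} (hst : Nat.Coprime s t) {a : G}
    (hs : a ∈ H + NG G s) (ht : a ∈ H + NG G t) : a ∈ H + NG G (s * t) := by
  rw [mem_add_NG_iff_s5] at hs ht ⊢
  obtain ⟨h₁, hh₁, g₁, hg₁⟩ := hs
  obtain ⟨h₂, hh₂, g₂, hg₂⟩ := ht
  obtain ⟨u, v, huv⟩ : ∃ u v : ℤ, (s:ℤ) * u + (t:ℤ) * v = 1 := by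
    refine ⟨Int.gcdA s t, Int.gcdB s t, ?_⟩
    have := Int.gcd_eq_gcd_ab (s : ℤ) (t : ℤ)
    rw [Int.gcd_natCast_natCast, hst] at this
    exact_mod_cast this.symm
  refine ⟨((s:ℤ) * u) • h₂ + ((t:ℤ) * v) • h₁,
    hadd _ (zsmul_mem' h0 hadd hneg _ hh₂) _ (zsmul_mem' h0 hadd hneg _ hh₁),
    u • g₂ + v • g₁, ?_⟩
  have e1 : h₁ = a - (s:ℤ) • g₁ := by rw [natCast_zsmul]; rw [← hg₁]; abel
  have e2 : h₂ = a - (t:ℤ) • g₂ := by rw [natCast_zsmul]; rw [← hg₂]; abel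
  have hst' : ((s*t : ℕ) : ℤ) • (u • g₂ + v • g₁) = (s*t : ℕ) • (u • g₂ + v • g₁) :=
    natCast_zsmul _ _
  rw [← hst', e1, e2]
  push_cast
  match_scalars
  · linear_combination huv
  · ring1
  · ring1

lemma keyA {G : Type*} [AddCommGroup G] {H : Set G} (h0 : (0:G) ∈ H)
    (hadd : ∀ x ∈ H, ∀ y ∈ H, x + y ∈ H) (hneg : ∀ x ∈ H, -x ∈ H) (a : G) :
    ∀ n : ℕ, 1 ≤ n →
      (∀ p : ℕ, p.Prime → p ∣ n → a ∈ H + NG G (p ^ n.factorization p)) →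
      a ∈ H + NG G n := by
  intro n
  induction n using Nat.strong_induction_on with
  | _ n ih =>
    intro hn hyp
    rcases eq_or_lt_of_le hn with h1 | h2
    · rw [mem_add_NG_iff_s5]
      exact ⟨0, h0, a, by rw [← h1, one_smul, zero_add]⟩
    · set p := n.minFac with hpdef
      have hn0 : n ≠ 0 := by omega
      have hp : p.Prime := Nat.minFac_prime (by omega)
      have hpn : p ∣ n := Nat.minFac_dvd n
      set r := n.factorization p with hrdef
      set m := n / p ^ r with hmdef
      have hnm : p ^ r * m = n := Nat.ordProj_mul_ordCompl_eq_self n p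
      have hr1 : 0 < r := hp.factorization_pos_of_dvd hn0 hpn
      have hm1 : 1 ≤ m := Nat.ordCompl_pos p hn0
      have hpr1 : 1 < p ^ r := Nat.one_lt_pow (by omega) hp.one_lt
      have hmlt : m < n := Nat.div_lt_self (by omega) hpr1
      have hmdvd : m ∣ n := ⟨p ^ r, by rw [mul_comm, hnm]⟩
      have hcop : Nat.Coprime (p ^ r) m := (Nat.coprime_ordCompl hp hn0).pow_left r
      have ham : a ∈ H + NG G m := by
        refine ih m hmlt hm1 ?_
        intro q hq hqm
        have hqn : q ∣ n := hqm.trans hmdvd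
        have hqp : q ≠ p := by
          rintro rfl
          exact Nat.not_dvd_ordCompl hp hn0 hqm
        have hfq : m.factorization q = n.factorization q := by
          rw [hmdef, Nat.factorization_ordCompl, Finsupp.erase_ne hqp]
        rw [hfq]
        exact hyp q hq hqn
      have hap : a ∈ H + NG G (p ^ r) := hyp p hp hpn
      have := coprime_step h0 hadd hneg hcop hap ham
      rwa [hnm] at this

/-- For `n ≥ 2` and `a ∈ G`, `H_{n,a} = ⋃_{p^r ∥ n} H_{p^r,a}`, where
the union is over all pairs `(p, r)` with `p` a prime divisor of `n` and `p^r` the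
maximal power of `p` dividing `n`. -/
theorem Hna_eq_union_of_prime_powers {G : Type*} [AddCommGroup G] [LinearOrder G] [IsOrderedAddMonoid G]
    (n : ℕ) (hn : 2 ≤ n) (a : G) :
    Hna n a =
      ⋃ pr ∈ {pr : ℕ × ℕ |
          pr.1.Prime ∧ pr.1 ∣ n ∧ pr.1 ^ pr.2 ∣ n ∧ ¬ pr.1 ^ (pr.2 + 1) ∣ n},
        Hna (pr.1 ^ pr.2) a := by
  have hn0 : n ≠ 0 := by omega
  ext x
  simp only [Set.mem_iUnion, Set.mem_setOf_eq, exists_prop]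
  constructor
  · intro hx
    rcases hx with hx0 | ⟨H, ⟨hconv, hna⟩, hxH⟩
    · -- x = 0
      refine ⟨(n.minFac, n.factorization n.minFac), ?_, Or.inl hx0⟩
      have hp := Nat.minFac_prime (by omega : n ≠ 1)
      exact ⟨hp, Nat.minFac_dvd n, Nat.ordProj_dvd n _,
        Nat.pow_succ_factorization_not_dvd hn0 hp⟩
    · obtain ⟨h0, hadd, hneg, hcvx⟩ := hconv
      have : ∃ p : ℕ, p.Prime ∧ p ∣ n ∧ a ∉ H + NG G (p ^ n.factorization p) := by
        by_contra hcon
        push_neg at hcon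
        exact hna (keyA h0 hadd hneg a n (by omega) fun p hp hpn => hcon p hp hpn)
      obtain ⟨p, hp, hpn, hap⟩ := this
      refine ⟨(p, n.factorization p),
        ⟨hp, hpn, Nat.ordProj_dvd n p, Nat.pow_succ_factorization_not_dvd hn0 hp⟩,
        Or.inr ⟨H, ⟨⟨h0, hadd, hneg, hcvx⟩, hap⟩, hxH⟩⟩
  · rintro ⟨⟨p, r⟩, ⟨hp, hpn, hprn, hsucc⟩, hx⟩
    rcases hx with hx0 | ⟨H, ⟨hconv, hna⟩, hxH⟩
    · exact Or.inl hx0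
    · refine Or.inr ⟨H, ⟨hconv, fun hmem => hna ?_⟩, hxH⟩
      exact Set.add_subset_add_left (NG_subset hprn) hmem
end

section
/- Let G be a linearly ordered abelian group, n ∈ ℕ with n ≥ 2, and a ∈ G. Then H'_{n,a} = ⋃_{p prime, p ∣ n} H'_{p,a}, and moreover ⋂{H_{n,c} : c ∈ G, H_{n,c} ⊋ H'_{n,a}} = ⋂_{p prime, p ∣ n} ⋂{H_{p,c} : c ∈ G, H_{p,c} ⊋ H'_{p,a}}, where an intersection over an empty family is G. -/
open Pointwise

section Aux

namespace Hproof

variable {G : Type*} [AddCommGroup G] [LinearOrder G] [IsOrderedAddMonoid G]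

theorem csg_nsmul {H : Set G} (h : IsConvexSubgroup H) {x : G} (hx : x ∈ H) (m : ℕ) :
    m • x ∈ H := by
  induction m with
  | zero => simpa using h.1
  | succ k ih => rw [succ_nsmul]; exact h.2.1 _ ih _ hx

theorem csg_abs {H : Set G} (h : IsConvexSubgroup H) {x : G} (hx : x ∈ H) : |x| ∈ H := by
  rcases abs_choice x with h' | h' <;> rw [h']
  · exact hx
  · exact h.2.2.1 _ hx

theorem csg_of_abs {H : Set G} (h : IsConvexSubgroup H) {x : G} (hx : |x| ∈ H) : x ∈ H := by
  rcases abs_choice x with h' | h'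
  · rwa [← h']
  · have := h.2.2.1 _ hx
    rwa [h', neg_neg] at this

theorem csg_div {H : Set G} (h : IsConvexSubgroup H) {m : ℕ} (hm : 1 ≤ m) {y : G}
    (hy : m • y ∈ H) : y ∈ H := by
  apply csg_of_abs h
  have habs : m • |y| ∈ H := by
    rcases abs_choice y with h' | h' <;> rw [h']
    · exact hy
    · rw [smul_neg]; exact h.2.2.1 _ hy
  refine h.2.2.2 _ habs _ (abs_nonneg y) ?_
  calc |y| = 1 • |y| := (one_smul ℕ _).symm
    _ ≤ m • |y| := nsmul_le_nsmul_left (abs_nonneg y) hm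

theorem csg_comparable {H₁ H₂ : Set G} (h₁ : IsConvexSubgroup H₁) (h₂ : IsConvexSubgroup H₂) :
    H₁ ⊆ H₂ ∨ H₂ ⊆ H₁ := by
  by_cases hc : H₁ ⊆ H₂
  · exact Or.inl hc
  · obtain ⟨x, hx1, hx2⟩ := Set.not_subset.mp hc
    refine Or.inr fun y hy => ?_
    rcases le_total |y| |x| with hle | hle
    · exact csg_of_abs h₁ (h₁.2.2.2 _ (csg_abs h₁ hx1) _ (abs_nonneg y) hle)
    · exact absurd (csg_of_abs h₂ (h₂.2.2.2 _ (csg_abs h₂ hy) _ (abs_nonneg x) hle)) hx2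

theorem csg_zunion {S : Set (Set G)} (hS : ∀ H ∈ S, IsConvexSubgroup H) :
    IsConvexSubgroup ({0} ∪ ⋃₀ S : Set G) := by
  refine ⟨Or.inl rfl, ?_, ?_, ?_⟩
  · rintro x (rfl | ⟨H1, hH1, hx⟩) y hy
    · simpa using hy
    · rcases hy with rfl | ⟨H2, hH2, hy⟩
      · exact Or.inr ⟨H1, hH1, by simpa using hx⟩
      · rcases csg_comparable (hS _ hH1) (hS _ hH2) with h | h
        · exact Or.inr ⟨H2, hH2, (hS _ hH2).2.1 _ (h hx) _ hy⟩
        · exact Or.inr ⟨H1, hH1, (hS _ hH1).2.1 _ hx _ (h hy)⟩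
  · rintro x (rfl | ⟨H1, hH1, hx⟩)
    · exact Or.inl (by simp)
    · exact Or.inr ⟨H1, hH1, (hS _ hH1).2.2.1 _ hx⟩
  · rintro x (rfl | ⟨H1, hH1, hx⟩) b hb0 hbx
    · exact Or.inl (le_antisymm hbx hb0)
    · exact Or.inr ⟨H1, hH1, (hS _ hH1).2.2.2 _ hx _ hb0 hbx⟩

theorem csg_Hna (n : ℕ) (x : G) : IsConvexSubgroup (Hna n x) :=
  csg_zunion fun _ hH => hH.1

theorem zero_mem_Hna (n : ℕ) (x : G) : (0 : G) ∈ Hna n x := Or.inl rfl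

theorem zero_mem_Hnb' (n : ℕ) (b : G) : (0 : G) ∈ Hnb' n b := Or.inl rfl

theorem mem_Hnb' {n : ℕ} {b y : G} :
    y ∈ Hnb' n b ↔ y = 0 ∨ ∃ x : G, y ∈ Hna n x ∧ b ∉ Hna n x := by
  constructor
  · rintro (h | ⟨H, ⟨x, rfl, hx⟩, hy⟩)
    · exact Or.inl h
    · exact Or.inr ⟨x, hy, hx⟩
  · rintro (rfl | ⟨x, hy, hx⟩)
    · exact Or.inl rfl
    · exact Or.inr ⟨Hna n x, ⟨x, rfl, hx⟩, hy⟩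

theorem le_Hna {H : Set G} {n : ℕ} {x : G} (hH : IsConvexSubgroup H)
    (hx : x ∉ H + NG G n) : H ⊆ Hna n x :=
  fun y hy => Or.inr ⟨H, ⟨hH, hx⟩, hy⟩

theorem Hna_not_mem {n : ℕ} {x : G} (hx : x ∉ NG G n) : x ∉ Hna n x + NG G n := by
  rw [Set.mem_add]
  rintro ⟨h, hh, s, hs, he⟩
  rcases hh with rfl | ⟨H, ⟨hH, hxH⟩, hh⟩
  · rw [zero_add] at he
    exact hx (he ▸ hs)
  · exact hxH (Set.mem_add.mpr ⟨h, hh, s, hs, he⟩)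

theorem Hna_trivial {n : ℕ} {x : G} (hx : x ∈ NG G n) : Hna n x = ({0} : Set G) := by
  unfold Hna
  have he : {H : Set G | IsConvexSubgroup H ∧ x ∉ H + NG G n} = ∅ := by
    ext H
    simp only [Set.mem_setOf_eq, Set.mem_empty_iff_false, iff_false, not_and, not_not]
    intro hH
    exact Set.mem_add.mpr ⟨0, hH.1, x, hx, zero_add x⟩
  rw [he]
  simp

theorem mem_add_scale {H : Set G} (hH : IsConvexSubgroup H) {m p : ℕ} (hm : 1 ≤ m) (x : G) :
    m • x ∈ H + NG G (m * p) ↔ x ∈ H + NG G p := by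
  rw [Set.mem_add, Set.mem_add]
  constructor
  · rintro ⟨h, hh, s, ⟨g, rfl⟩, he⟩
    have key : m • (x - p • g) = h := by
      rw [smul_sub, ← he, mul_smul]
      abel
    have hmem : x - p • g ∈ H := csg_div hH hm (key ▸ hh)
    exact ⟨x - p • g, hmem, p • g, ⟨g, rfl⟩, by abel⟩
  · rintro ⟨h, hh, s, ⟨g, rfl⟩, he⟩
    refine ⟨m • h, csg_nsmul hH hh m, (m * p) • g, ⟨g, rfl⟩, ?_⟩
    rw [mul_smul, ← smul_add, he]

theorem Hna_scale' {m p : ℕ} (hm : 1 ≤ m) (x : G) : Hna (m * p) (m • x) = Hna p x := by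
  unfold Hna
  have hfam : {H : Set G | IsConvexSubgroup H ∧ m • x ∉ H + NG G (m * p)} =
      {H : Set G | IsConvexSubgroup H ∧ x ∉ H + NG G p} := by
    ext H
    simp only [Set.mem_setOf_eq, and_congr_right_iff]
    intro hH
    rw [mem_add_scale hH hm]
  rw [hfam]

theorem Hna_scale {p n : ℕ} (hp : p ∣ n) (hn : 0 < n) (x : G) :
    Hna n ((n / p) • x) = Hna p x := by
  have hp0 : 0 < p := Nat.pos_of_dvd_of_pos hp hn
  have hm : 1 ≤ n / p := (Nat.one_le_div_iff hp0).mpr (Nat.le_of_dvd hn hp)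
  have h := Hna_scale' (p := p) hm x
  rwa [Nat.div_mul_cancel hp] at h

theorem Hna_eq_prime {n : ℕ} (hn : 2 ≤ n) {x : G} (hx : x ∉ NG G n) :
    ∃ p g, p.Prime ∧ p ∣ n ∧ Hna n x = Hna (G := G) p g := by
  classical
  set H := Hna n x with hHdef
  have hH : IsConvexSubgroup H := csg_Hna n x
  have hself : x ∉ H + NG G n := Hna_not_mem hx
  have hn0 : 0 < n := by omega
  set P : ℕ → Prop := fun d => d ∣ n ∧ ∃ h ∈ H, ∃ g : G, h + d • g = x with hP
  set d : ℕ := Nat.findGreatest P n with hd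
  have hP1 : P 1 := ⟨one_dvd n, 0, hH.1, x, by simp⟩
  have hd1 : 1 ≤ d := Nat.le_findGreatest hn0 hP1
  have hdP : P d := Nat.findGreatest_spec hn0 hP1
  obtain ⟨hdvd, h, hh, g, hg⟩ := hdP
  have hdn : d ≠ n := by
    intro hdn'
    rw [hdn'] at hg
    exact hself (Set.mem_add.mpr ⟨h, hh, n • g, ⟨g, rfl⟩, hg⟩)
  have hmul : n / d * d = n := Nat.div_mul_cancel hdvd
  have hnd2 : 2 ≤ n / d := by
    by_contra hcon
    have h1 : 1 ≤ n / d := (Nat.one_le_div_iff (by omega : 0 < d)).mpr (Nat.le_of_dvd hn0 hdvd)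
    have heq1 : n / d = 1 := by omega
    rw [heq1, one_mul] at hmul
    exact hdn hmul
  have hp : (n / d).minFac.Prime := Nat.minFac_prime (by omega)
  have hpd : (n / d).minFac ∣ (n / d) := Nat.minFac_dvd _
  set p := (n / d).minFac with hpdef
  have hpn : p ∣ n := hpd.trans (Nat.div_dvd_of_dvd hdvd)
  have hp2 : 2 ≤ p := hp.two_le
  have key1 : g ∉ H + NG G p := by
    rw [Set.mem_add]
    rintro ⟨h', hh', s, ⟨g', rfl⟩, he⟩
    have hPdp : P (d * p) := by
      refine ⟨?_, h + d • h', hH.2.1 _ hh _ (csg_nsmul hH hh' d), g', ?_⟩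
      · obtain ⟨t, ht⟩ := hpd
        exact ⟨t, by rw [← hmul, ht]; ring⟩
      · rw [mul_smul]
        have hdg : d • g = d • h' + d • (p • g') := by rw [← smul_add, he]
        rw [add_assoc, ← hdg, hg]
    have hlt : d < d * p := by
      have := (Nat.lt_mul_iff_one_lt_right (by omega : 0 < d)).mpr (by omega : 1 < p)
      exact this
    have hle : d * p ≤ n := Nat.le_of_dvd hn0 hPdp.1
    exact Nat.findGreatest_is_greatest hlt hle hPdp
  have hsub1 : H ⊆ Hna p g := le_Hna hH key1
  have hsub2 : Hna p g ⊆ H := by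
    rintro y (rfl | ⟨H'', ⟨hH'', hg''⟩, hy⟩)
    · exact hH.1
    · rcases csg_comparable hH'' hH with hc | hc
      · exact hc hy
      · have hxn : x ∉ H'' + NG G n := by
          rw [Set.mem_add]
          rintro ⟨h₂, hh₂, s, ⟨g₂, rfl⟩, he₂⟩
          apply hg''
          rw [Set.mem_add]
          have hkey : d • (g - (n / d) • g₂) = h₂ - h := by
            rw [smul_sub, smul_smul]
            have hdm : d * (n / d) = n := by rw [mul_comm]; exact hmul
            rw [hdm, sub_eq_sub_iff_add_eq_add]
            have hx2 : h + d • g = h₂ + n • g₂ := hg.trans he₂.symm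
            rw [add_comm (d • g) h, hx2, add_comm]
          have hmem : g - (n / d) • g₂ ∈ H'' := by
            refine csg_div hH'' hd1 ?_
            rw [hkey, sub_eq_add_neg]
            exact hH''.2.1 _ hh₂ _ (hH''.2.2.1 _ (hc hh))
          obtain ⟨t, ht⟩ := hpd
          refine ⟨g - (n / d) • g₂, hmem, p • (t • g₂), ⟨t • g₂, rfl⟩, ?_⟩
          have hps : p • (t • g₂) = (n / d) • g₂ := by rw [smul_smul, ← ht]
          rw [hps, sub_add_cancel]
        exact (le_Hna hH'' hxn) hy
  exact ⟨p, g, hp, hpn, Set.Subset.antisymm hsub1 hsub2⟩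


theorem part1 {n : ℕ} (hn : 2 ≤ n) (a : G) :
    Hnb' n a = ⋃ p ∈ {p : ℕ | p.Prime ∧ p ∣ n}, Hnb' p a := by
  ext y
  simp only [Set.mem_iUnion, Set.mem_setOf_eq, exists_prop]
  constructor
  · intro hy
    rcases mem_Hnb'.mp hy with rfl | ⟨x, hy', hax⟩
    · exact ⟨n.minFac, ⟨Nat.minFac_prime (by omega), Nat.minFac_dvd n⟩, zero_mem_Hnb' _ a⟩
    · by_cases hxn : x ∈ NG G n
      · rw [Hna_trivial hxn, Set.mem_singleton_iff] at hy'
        subst hy'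
        exact ⟨n.minFac, ⟨Nat.minFac_prime (by omega), Nat.minFac_dvd n⟩, zero_mem_Hnb' _ a⟩
      · obtain ⟨p, g, hp, hpn, heq⟩ := Hna_eq_prime hn hxn
        rw [heq] at hy' hax
        exact ⟨p, ⟨hp, hpn⟩, mem_Hnb'.mpr (Or.inr ⟨g, hy', hax⟩)⟩
  · rintro ⟨p, ⟨hp, hpn⟩, hy⟩
    rcases mem_Hnb'.mp hy with rfl | ⟨x, hy', hax⟩
    · exact zero_mem_Hnb' n a
    · have heq := Hna_scale hpn (by omega : 0 < n) x
      refine mem_Hnb'.mpr (Or.inr ⟨(n / p) • x, ?_, ?_⟩) <;> rw [heq]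
      · exact hy'
      · exact hax

theorem Hnb'_subset_of_mem {n : ℕ} {a c : G} (hc : a ∈ Hna n c) : Hnb' n a ⊆ Hna n c := by
  intro y hy
  rcases mem_Hnb'.mp hy with rfl | ⟨x, hy', hax⟩
  · exact zero_mem_Hna n c
  · rcases csg_comparable (csg_Hna n x) (csg_Hna n c) with h | h
    · exact h hy'
    · exact absurd (h hc) hax

theorem a_mem_of_ssub {n : ℕ} {a c : G} (h : Hnb' n a ⊂ Hna n c) : a ∈ Hna n c := by
  by_contra hac
  rw [ssubset_iff_subset_not_subset] at h
  exact h.2 fun y hy => mem_Hnb'.mpr (Or.inr ⟨c, hy, hac⟩)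

theorem Hna_nontrivial_of_ssub {n : ℕ} {a c : G} (h : Hnb' n a ⊂ Hna n c) : c ∉ NG G n := by
  intro hc
  rw [ssubset_iff_subset_not_subset, Hna_trivial hc] at h
  refine h.2 fun y hy => ?_
  rw [Set.mem_singleton_iff] at hy
  subst hy
  exact zero_mem_Hnb' n a

theorem not_mem_Hnb'_self {n : ℕ} {a : G} (ha : a ≠ 0) : a ∉ Hnb' n a := by
  intro h
  rcases mem_Hnb'.mp h with rfl | ⟨x, h1, h2⟩
  · exact ha rfl
  · exact h2 h1

theorem Hnb'_zero (n : ℕ) : Hnb' n (0 : G) = ({0} : Set G) := by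
  apply Set.Subset.antisymm
  · intro y hy
    rcases mem_Hnb'.mp hy with rfl | ⟨x, h1, h2⟩
    · rfl
    · exact absurd (zero_mem_Hna n x) h2
  · intro y hy
    rw [Set.mem_singleton_iff] at hy
    subst hy
    exact zero_mem_Hnb' n 0

theorem part2 {n : ℕ} (hn : 2 ≤ n) (a : G) :
    {H : Set G | ∃ c : G, H = Hna n c ∧ Hnb' n a ⊂ H} =
      ⋃ p ∈ {p : ℕ | p.Prime ∧ p ∣ n}, {H : Set G | ∃ c : G, H = Hna p c ∧ Hnb' p a ⊂ H} := by
  have hpart1 := part1 hn a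
  ext H
  simp only [Set.mem_iUnion, Set.mem_setOf_eq, exists_prop]
  constructor
  · rintro ⟨c, rfl, hss⟩
    rw [ssubset_iff_subset_not_subset] at hss
    have hcn : c ∉ NG G n := Hna_nontrivial_of_ssub (ssubset_iff_subset_not_subset.mpr hss)
    obtain ⟨p, g, hp, hpn, heq⟩ := Hna_eq_prime hn hcn
    refine ⟨p, ⟨hp, hpn⟩, g, heq, ?_⟩
    have hsubpn : Hnb' p a ⊆ Hnb' n a := by
      rw [hpart1]
      exact Set.subset_biUnion_of_mem (u := fun p => Hnb' p a) ⟨hp, hpn⟩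
    rw [ssubset_iff_subset_not_subset]
    exact ⟨hsubpn.trans hss.1, fun hcon => hss.2 (hcon.trans hsubpn)⟩
  · rintro ⟨p, ⟨hp, hpn⟩, c, rfl, hss⟩
    have heq := Hna_scale hpn (by omega : 0 < n) c
    have hamem : a ∈ Hna p c := a_mem_of_ssub hss
    refine ⟨(n / p) • c, heq.symm, ?_⟩
    rw [ssubset_iff_subset_not_subset]
    refine ⟨?_, fun hcon => ?_⟩
    · have h1 : a ∈ Hna n ((n / p) • c) := by rw [heq]; exact hamem
      exact (Hnb'_subset_of_mem h1).trans heq.subset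
    rw [ssubset_iff_subset_not_subset] at hss
    by_cases ha : a = 0
    · subst ha
      rw [Hnb'_zero] at hcon
      refine hss.2 fun y hy => ?_
      have := hcon hy
      rw [Set.mem_singleton_iff] at this
      subst this
      exact zero_mem_Hnb' p 0
    · exact not_mem_Hnb'_self ha (hcon hamem)

end Hproof
end Aux

/-- For `n ≥ 2` and `a ∈ G`: `H'_{n,a} = ⋃_{p prime, p ∣ n} H'_{p,a}`,
and the intersection of all `H_{n,c}` strictly containing `H'_{n,a}` equals the
intersection over prime divisors `p` of `n` of the intersections of all `H_{p,c}`
strictly containing `H'_{p,a}` (empty intersections being all of `G`, i.e. `Set.univ`). -/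


theorem Hnb'_eq_union_primes_and_inter {G : Type*} [AddCommGroup G] [LinearOrder G] [IsOrderedAddMonoid G]
    (n : ℕ) (hn : 2 ≤ n) (a : G) :
    Hnb' n a = (⋃ p ∈ {p : ℕ | p.Prime ∧ p ∣ n}, Hnb' p a) ∧
    ⋂₀ {H : Set G | ∃ c : G, H = Hna n c ∧ Hnb' n a ⊂ H} =
      ⋂ p ∈ {p : ℕ | p.Prime ∧ p ∣ n},
        ⋂₀ {H : Set G | ∃ c : G, H = Hna p c ∧ Hnb' p a ⊂ H} := by
  refine ⟨Hproof.part1 hn a, ?_⟩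
  rw [Hproof.part2 hn a]
  ext y
  simp only [Set.mem_sInter, Set.mem_iUnion, Set.mem_iInter, Set.mem_setOf_eq, exists_prop]
  constructor
  · intro h p hp S hS
    exact h S ⟨p, hp, hS⟩
  · rintro h S ⟨p, hp, hS⟩
    exact h p hp S hS
end

section
/- Let G be a linearly ordered abelian group, n ∈ ℕ, and H ⊆ G any convex subgroup. Then H + nG = ⋂{H_{n,a} + nG : a ∈ G, H ⊆ H_{n,a}}, where the intersection over the empty family is G. -/
open Pointwise

/-- For any convex subgroup `H` and `n ∈ ℕ` (positive):
`H + nG = ⋂ {H_{n,a} + nG : a ∈ G, H ⊆ H_{n,a}}`, where the intersection over the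
empty family is all of `G` (`Set.univ`). -/
theorem add_NG_eq_sInter_Hna_add {G : Type*} [AddCommGroup G] [LinearOrder G] [IsOrderedAddMonoid G]
    (n : ℕ) (hn : 0 < n) (H : Set G) (hH : IsConvexSubgroup H) :
    H + NG G n = ⋂₀ {S : Set G | ∃ a : G, H ⊆ Hna n a ∧ S = Hna n a + NG G n} := by
  apply Set.Subset.antisymm
  · intro x hx S hS
    obtain ⟨a, hHa, rfl⟩ := hS
    obtain ⟨h, hh, g, hg, rfl⟩ := hx
    exact ⟨h, hHa hh, g, hg, rfl⟩
  · intro x hx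
    by_contra hxn
    have hHsub : H ⊆ Hna n x := fun y hy => Or.inr ⟨H, ⟨hH, hxn⟩, hy⟩
    have hx2 : x ∈ Hna n x + NG G n := hx _ ⟨x, hHsub, rfl⟩
    obtain ⟨h, hh, g, hg, hsum⟩ := hx2
    rcases hh with h0 | ⟨H', ⟨hH', hxH'⟩, hhH'⟩
    · apply hxn
      refine ⟨0, hH.1, g, hg, ?_⟩
      simpa [Set.mem_singleton_iff.mp h0] using hsum
    · exact hxH' ⟨h, hhH', g, hg, hsum⟩
end

section
/- Let G be a linearly ordered abelian group, C ⊆ G a convex subgroup, and m, n ∈ ℕ. Then G^{[n]}_C + mG = G^{[n]}_C + gcd(m,n)G. -/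
open Pointwise

/-- For a convex subgroup `C` and positive `m, n`:
`G^{[n]}_C + mG = G^{[n]}_C + gcd(m,n)G`. -/
theorem Gbr_add_NG_eq_gcd {G : Type*} [AddCommGroup G] [LinearOrder G] [IsOrderedAddMonoid G]
    (m n : ℕ) (hm : 0 < m) (hn : 0 < n) (C : Set G) (hC : IsConvexSubgroup C) :
    Gbr C n + NG G m = Gbr C n + NG G (Nat.gcd m n) := by
  have hNG_sub : NG G n ⊆ Gbr C n := by
    intro x ⟨g, hg⟩ S hS
    obtain ⟨H, hH, _, rfl⟩ := hS
    exact ⟨0, hH.1, x, ⟨g, hg⟩, zero_add x⟩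
  have hGbr_add : ∀ a ∈ Gbr C n, ∀ b ∈ Gbr C n, a + b ∈ Gbr C n := by
    intro a ha b hb S hS
    obtain ⟨H, hH, _, rfl⟩ := hS
    obtain ⟨h1, hh1, _, ⟨g1, rfl⟩, rfl⟩ := ha _ ⟨H, hH, ‹C ⊂ H›, rfl⟩
    obtain ⟨h2, hh2, _, ⟨g2, rfl⟩, rfl⟩ := hb _ ⟨H, hH, ‹C ⊂ H›, rfl⟩
    refine ⟨h1 + h2, hH.2.1 _ hh1 _ hh2, n • (g1 + g2), ⟨_, rfl⟩, by rw [smul_add]; exact add_add_add_comm _ _ _ _⟩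
  ext x
  constructor
  · rintro ⟨c, hc, _, ⟨g, rfl⟩, rfl⟩
    obtain ⟨k, hk⟩ := Nat.gcd_dvd_left m n
    exact ⟨c, hc, Nat.gcd m n • (k • g), ⟨k • g, rfl⟩, by rw [smul_smul, ← hk]⟩
  · rintro ⟨c, hc, _, ⟨g, rfl⟩, rfl⟩
    set d := Nat.gcd m n with hd
    have hbez : (d : ℤ) = (m : ℤ) * Int.gcdA m n + (n : ℤ) * Int.gcdB m n := by
      have := Int.gcd_eq_gcd_ab (m : ℤ) (n : ℤ)
      simpa [Int.gcd_natCast_natCast] using this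
    have key : d • g = m • (Int.gcdA m n • g) + n • (Int.gcdB m n • g) := by
      have : (d : ℤ) • g = ((m : ℤ) * Int.gcdA m n) • g + ((n : ℤ) * Int.gcdB m n) • g := by
        rw [← add_smul, ← hbez]
      rw [natCast_zsmul] at this
      rw [this, mul_smul, mul_smul, natCast_zsmul, natCast_zsmul]
    refine ⟨c + n • (Int.gcdB m n • g), hGbr_add _ hc _ (hNG_sub ⟨_, rfl⟩),
      m • (Int.gcdA m n • g), ⟨_, rfl⟩, ?_⟩
    rw [key]; abel
end

section
/- Let G be a linearly ordered abelian group and C ⊆ G a convex subgroup. Suppose m = m₁·m₂ ∈ ℕ with m₁, m₂ coprime and n = n₁·n₂ ∈ ℕ with n₁, n₂ coprime. Then: (i) C + mG = (C + m₁G) ∩ (C + m₂G); (ii) G^{[n]}_C + mG = (G^{[n]}_C + m₁G) ∩ (G^{[n]}_C + m₂G); (iii) G^{[n]}_C + mG = (G^{[n₁]}_C + mG) ∩ (G^{[n₂]}_C + mG). -/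
open Pointwise

section Aux

variable {G : Type*} [AddCommGroup G] [LinearOrder G] [IsOrderedAddMonoid G]

/-- A (not necessarily convex) subgroup, as a set. -/
def IsSub (A : Set G) : Prop :=
  (0 : G) ∈ A ∧ (∀ x ∈ A, ∀ y ∈ A, x + y ∈ A) ∧ ∀ x ∈ A, -x ∈ A

lemma IsConvexSubgroup.isSub {A : Set G} (h : IsConvexSubgroup A) : IsSub A :=
  ⟨h.1, h.2.1, h.2.2.1⟩

lemma IsSub.zsmul_mem {A : Set G} (hA : IsSub A) {a : G} (ha : a ∈ A) (k : ℤ) :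
    k • a ∈ A := by
  induction k using Int.induction_on with
  | zero => simpa using hA.1
  | succ n ih => rw [add_smul, one_smul]; exact hA.2.1 _ ih _ ha
  | pred n ih => rw [sub_smul, one_smul, sub_eq_add_neg]; exact hA.2.1 _ ih _ (hA.2.2 _ ha)

lemma isSub_NG (n : ℕ) : IsSub (NG G n) := by
  refine ⟨⟨0, smul_zero n⟩, ?_, ?_⟩
  · rintro x ⟨g, rfl⟩ y ⟨g', rfl⟩; exact ⟨g + g', smul_add n g g'⟩
  · rintro x ⟨g, rfl⟩; exact ⟨-g, smul_neg n g⟩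

lemma IsSub.add {A B : Set G} (hA : IsSub A) (hB : IsSub B) : IsSub (A + B) := by
  refine ⟨?_, ?_, ?_⟩
  · exact Set.mem_add.mpr ⟨0, hA.1, 0, hB.1, add_zero 0⟩
  · rintro x hx y hy
    obtain ⟨a, ha, b, hb, rfl⟩ := Set.mem_add.mp hx
    obtain ⟨a', ha', b', hb', rfl⟩ := Set.mem_add.mp hy
    exact Set.mem_add.mpr ⟨a + a', hA.2.1 _ ha _ ha', b + b', hB.2.1 _ hb _ hb',
      (add_add_add_comm a b a' b').symm⟩
  · rintro x hx
    obtain ⟨a, ha, b, hb, rfl⟩ := Set.mem_add.mp hx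
    exact Set.mem_add.mpr ⟨-a, hA.2.2 _ ha, -b, hB.2.2 _ hb, (neg_add a b).symm⟩

lemma NG_subset_of_dvd {d n : ℕ} (h : d ∣ n) : (NG G n : Set G) ⊆ NG G d := by
  rintro x ⟨g, rfl⟩
  obtain ⟨k, rfl⟩ := h
  exact ⟨k • g, (mul_smul d k g).symm⟩

lemma mem_Gbr {C : Set G} {n : ℕ} {x : G} :
    x ∈ Gbr C n ↔ ∀ H : Set G, IsConvexSubgroup H → C ⊂ H → x ∈ H + NG G n := by
  simp only [Gbr, Set.mem_sInter, Set.mem_setOf_eq]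
  constructor
  · intro h H hH hCH; exact h _ ⟨H, hH, hCH, rfl⟩
  · rintro h S ⟨H, hH, hCH, rfl⟩; exact h H hH hCH

lemma isSub_Gbr (C : Set G) (n : ℕ) : IsSub (Gbr C n) := by
  refine ⟨?_, ?_, ?_⟩
  · exact mem_Gbr.mpr fun H hH _ => (hH.isSub.add (isSub_NG n)).1
  · intro x hx y hy
    exact mem_Gbr.mpr fun H hH hCH => (hH.isSub.add (isSub_NG n)).2.1 _
      (mem_Gbr.mp hx H hH hCH) _ (mem_Gbr.mp hy H hH hCH)
  · intro x hx
    exact mem_Gbr.mpr fun H hH hCH => (hH.isSub.add (isSub_NG n)).2.2 _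
      (mem_Gbr.mp hx H hH hCH)

lemma Gbr_subset_of_dvd {C : Set G} {d n : ℕ} (h : d ∣ n) : Gbr C n ⊆ Gbr C d := by
  intro x hx
  exact mem_Gbr.mpr fun H hH hCH =>
    Set.add_subset_add_left (NG_subset_of_dvd h) (mem_Gbr.mp hx H hH hCH)

/-- Bezout coefficients over `ℤ` from natural coprimality. -/
lemma exists_bezout {m₁ m₂ : ℕ} (hm : Nat.Coprime m₁ m₂) :
    ∃ u v : ℤ, u * (m₁ : ℤ) + v * (m₂ : ℤ) = 1 :=
  Int.isCoprime_iff_gcd_eq_one.mpr (by simpa using hm)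

/-- The key lemma for parts (i) and (ii): for any subgroup `A` and coprime `m₁, m₂`,
`A + m₁m₂G = (A + m₁G) ∩ (A + m₂G)`. -/
lemma IsSub.add_NG_mul {A : Set G} (hA : IsSub A) {m₁ m₂ : ℕ} (hm : Nat.Coprime m₁ m₂) :
    A + NG G (m₁ * m₂) = (A + NG G m₁) ∩ (A + NG G m₂) := by
  apply subset_antisymm
  · exact Set.subset_inter
      (Set.add_subset_add_left (NG_subset_of_dvd ⟨m₂, rfl⟩))
      (Set.add_subset_add_left (NG_subset_of_dvd ⟨m₁, mul_comm m₁ m₂⟩))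
  · rintro x ⟨hx1, hx2⟩
    obtain ⟨c₁, hc₁, b₁, ⟨g₁, rfl⟩, h1⟩ := Set.mem_add.mp hx1
    obtain ⟨c₂, hc₂, b₂, ⟨g₂, rfl⟩, h2⟩ := Set.mem_add.mp hx2
    obtain ⟨u, v, huv⟩ := exists_bezout hm
    have h1' : c₁ + (m₁ : ℤ) • g₁ = x := by rw [natCast_zsmul]; exact h1
    have h2' : c₂ + (m₂ : ℤ) • g₂ = x := by rw [natCast_zsmul]; exact h2
    have hx : (u * (m₁ : ℤ) + v * (m₂ : ℤ)) • x = (1 : ℤ) • x := by rw [huv]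
    refine Set.mem_add.mpr ⟨(u * (m₁ : ℤ)) • c₂ + (v * (m₂ : ℤ)) • c₁,
      hA.2.1 _ (hA.zsmul_mem hc₂ _) _ (hA.zsmul_mem hc₁ _),
      (m₁ * m₂) • (u • g₂ + v • g₁), ⟨u • g₂ + v • g₁, rfl⟩, ?_⟩
    have hcast : (m₁ * m₂) • (u • g₂ + v • g₁)
        = ((m₁ : ℤ) * (m₂ : ℤ)) • (u • g₂ + v • g₁) := by
      rw [← natCast_zsmul]; push_cast; ring_nf
    rw [hcast]
    linear_combination (norm := module) (u * (m₁ : ℤ)) • h2' + (v * (m₂ : ℤ)) • h1' + hx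

end Aux

/-- For a convex subgroup `C`, `m = m₁·m₂` with `m₁, m₂` coprime, and
`n = n₁·n₂` with `n₁, n₂` coprime:
(i) `C + mG = (C + m₁G) ∩ (C + m₂G)`;
(ii) `G^{[n]}_C + mG = (G^{[n]}_C + m₁G) ∩ (G^{[n]}_C + m₂G)`;
(iii) `G^{[n]}_C + mG = (G^{[n₁]}_C + mG) ∩ (G^{[n₂]}_C + mG)`. -/
theorem Gbr_add_NG_factorize {G : Type*} [AddCommGroup G] [LinearOrder G] [IsOrderedAddMonoid G]
    (C : Set G) (hC : IsConvexSubgroup C) (m₁ m₂ n₁ n₂ : ℕ)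
    (hm₁ : 0 < m₁) (hm₂ : 0 < m₂) (hn₁ : 0 < n₁) (hn₂ : 0 < n₂)
    (hm : Nat.Coprime m₁ m₂) (hn : Nat.Coprime n₁ n₂) :
    C + NG G (m₁ * m₂) = (C + NG G m₁) ∩ (C + NG G m₂) ∧
    Gbr C (n₁ * n₂) + NG G (m₁ * m₂) =
      (Gbr C (n₁ * n₂) + NG G m₁) ∩ (Gbr C (n₁ * n₂) + NG G m₂) ∧
    Gbr C (n₁ * n₂) + NG G (m₁ * m₂) =
      (Gbr C n₁ + NG G (m₁ * m₂)) ∩ (Gbr C n₂ + NG G (m₁ * m₂)) := by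
  obtain ⟨u, v, huv⟩ := exists_bezout hn
  refine ⟨hC.isSub.add_NG_mul hm, (isSub_Gbr C (n₁ * n₂)).add_NG_mul hm, ?_⟩
  apply subset_antisymm
  · exact Set.subset_inter
      (Set.add_subset_add_right (Gbr_subset_of_dvd ⟨n₂, rfl⟩))
      (Set.add_subset_add_right (Gbr_subset_of_dvd ⟨n₁, mul_comm n₁ n₂⟩))
  · rintro x ⟨hx1, hx2⟩
    obtain ⟨y₁, hy₁, b₁, ⟨g₁, rfl⟩, h1⟩ := Set.mem_add.mp hx1
    obtain ⟨y₂, hy₂, b₂, ⟨g₂, rfl⟩, h2⟩ := Set.mem_add.mp hx2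
    have h1' : y₁ + ((m₁ : ℤ) * (m₂ : ℤ)) • g₁ = x := by
      rw [show ((m₁ : ℤ) * (m₂ : ℤ)) = ((m₁ * m₂ : ℕ) : ℤ) by push_cast; ring,
        natCast_zsmul]; exact h1
    have h2' : y₂ + ((m₁ : ℤ) * (m₂ : ℤ)) • g₂ = x := by
      rw [show ((m₁ : ℤ) * (m₂ : ℤ)) = ((m₁ * m₂ : ℕ) : ℤ) by push_cast; ring,
        natCast_zsmul]; exact h2
    have hx : (u * (n₁ : ℤ) + v * (n₂ : ℤ)) • x = (1 : ℤ) • x := by rw [huv]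
    set y : G := (v * (n₂ : ℤ)) • y₁ + (u * (n₁ : ℤ)) • y₂ with hy
    set g : G := (v * (n₂ : ℤ)) • g₁ + (u * (n₁ : ℤ)) • g₂ with hg
    have hyGbr : y ∈ Gbr C (n₁ * n₂) := by
      refine mem_Gbr.mpr fun H hH hCH => ?_
      obtain ⟨h₁, hh₁, c₁, ⟨a₁, rfl⟩, e₁⟩ := Set.mem_add.mp (mem_Gbr.mp hy₁ H hH hCH)
      obtain ⟨h₂, hh₂, c₂, ⟨a₂, rfl⟩, e₂⟩ := Set.mem_add.mp (mem_Gbr.mp hy₂ H hH hCH)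
      have e₁' : h₁ + (n₁ : ℤ) • a₁ = y₁ := by rw [natCast_zsmul]; exact e₁
      have e₂' : h₂ + (n₂ : ℤ) • a₂ = y₂ := by rw [natCast_zsmul]; exact e₂
      refine Set.mem_add.mpr ⟨(v * (n₂ : ℤ)) • h₁ + (u * (n₁ : ℤ)) • h₂,
        hH.isSub.2.1 _ (hH.isSub.zsmul_mem hh₁ _) _ (hH.isSub.zsmul_mem hh₂ _),
        (n₁ * n₂) • (v • a₁ + u • a₂), ⟨v • a₁ + u • a₂, rfl⟩, ?_⟩
      have hcast : (n₁ * n₂) • (v • a₁ + u • a₂)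
          = ((n₁ : ℤ) * (n₂ : ℤ)) • (v • a₁ + u • a₂) := by
        rw [← natCast_zsmul]; push_cast; ring_nf
      rw [hcast, hy]
      linear_combination (norm := module) (v * (n₂ : ℤ)) • e₁' + (u * (n₁ : ℤ)) • e₂'
    refine Set.mem_add.mpr ⟨y, hyGbr, (m₁ * m₂) • g, ⟨g, rfl⟩, ?_⟩
    have hcast : (m₁ * m₂) • g = ((m₁ : ℤ) * (m₂ : ℤ)) • g := by
      rw [← natCast_zsmul]; push_cast; ring_nf
    rw [hcast, hy, hg]
    linear_combination (norm := module) (v * (n₂ : ℤ)) • h1' + (u * (n₁ : ℤ)) • h2' + hx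
end

section
/- Let G be a linearly ordered abelian group, n ∈ ℕ, a ∈ G, and let C ⊆ G be a subgroup which is a union of groups of the form H_{n,b} for b ranging over some subset of G (in particular, C could be H_{n,b} or H'_{n,b} for some b ∈ G). If a ∉ C, then C ⊆ H'_{n,a}. Conversely, if a ≠ 0 and C ⊆ H'_{n,a}, then a ∉ C. -/
open Pointwise

/-- Let `C` be a subgroup of `G` which is a union of groups of the
form `H_{n,b}` with `b` ranging over some (necessarily nonempty, since `C` is a
subgroup) subset of `G`. If `a ∉ C` then `C ⊆ H'_{n,a}`; conversely, if `a ≠ 0` and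
`C ⊆ H'_{n,a}`, then `a ∉ C`. -/
theorem subset_Hnb'_iff {G : Type*} [AddCommGroup G] [LinearOrder G] [IsOrderedAddMonoid G]
    (n : ℕ) (hn : 0 < n) (a : G) (C : Set G)
    (hC : ∃ T : Set G, T.Nonempty ∧ C = ⋃ b ∈ T, Hna n b) :
    (a ∉ C → C ⊆ Hnb' n a) ∧
    (a ≠ 0 → C ⊆ Hnb' n a → a ∉ C) := by
  obtain ⟨T, hT, rfl⟩ := hC
  constructor
  · intro ha x hx
    simp only [Set.mem_iUnion] at hx
    obtain ⟨b, hb, hxb⟩ := hx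
    have hab : a ∉ Hna n b := fun h => ha (Set.mem_biUnion hb h)
    exact Or.inr ⟨Hna n b, ⟨b, rfl, hab⟩, hxb⟩
  · intro ha0 hsub haC
    rcases hsub haC with h | ⟨H, ⟨b, rfl, hab⟩, haH⟩
    · exact ha0 h
    · exact hab haH
end

section
/- Let G be a linearly ordered abelian group and C ⊆ G a convex subgroup such that G/C is discrete, and let e ∈ G be a preimage of the minimal positive element of G/C (i.e., e > 0, e ∉ C, and for every b ∈ G with b > 0 and b ∉ C, either b − e ∈ C or e < b). Let m ∈ ℕ, k ∈ {1, …, m−1}, and x ∈ G. If x − k·e ∈ C + mG, then C = H_{m,x}. -/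
open Pointwise

private lemma nsmul_mem_of_closed {G : Type*} [AddCommGroup G] [LinearOrder G] [IsOrderedAddMonoid G]
    {S : Set G} (h0 : (0:G) ∈ S) (hadd : ∀ x ∈ S, ∀ y ∈ S, x + y ∈ S)
    {g : G} (hg : g ∈ S) (n : ℕ) : n • g ∈ S := by
  induction n with
  | zero => simpa using h0
  | succ n ih => rw [succ_nsmul]; exact hadd _ ih _ hg

/-- Let `C` be a convex subgroup such that `G/C` is discrete, with
`e` a preimage of the minimal positive element of `G/C`. Let `m ∈ ℕ`,
`k ∈ {1, …, m-1}`, and `x ∈ G`. If `x - k·e ∈ C + mG`, then `C = H_{m,x}`. -/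
theorem eq_Hna_of_congruent_discrete {G : Type*} [AddCommGroup G] [LinearOrder G] [IsOrderedAddMonoid G]
    (C : Set G) (hC : IsConvexSubgroup C) (e : G)
    (he1 : 0 < e) (he2 : e ∉ C)
    (he3 : ∀ b : G, 0 < b → b ∉ C → (b - e ∈ C ∨ e < b))
    (m k : ℕ) (hk1 : 1 ≤ k) (hk2 : k ≤ m - 1) (x : G)
    (hx : x - k • e ∈ C + NG G m) :
    C = Hna m x := by
  obtain ⟨hC0, hCadd, hCneg, hCconv⟩ := hC
  have hm : 2 ≤ m := by omega
  have hkm : k ≤ m := by omega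
  -- positive multiples of e are not in C
  have hne : ∀ n : ℕ, 1 ≤ n → n • e ∉ C := by
    intro n hn hmem
    refine he2 (hCconv _ hmem e he1.le ?_)
    calc e = 1 • e := (one_nsmul e).symm
    _ ≤ n • e := nsmul_le_nsmul_left he1.le hn
  have hkeC : k • e ∉ C := hne k hk1
  have hmkeC : (m - k) • e ∉ C := hne (m - k) (by omega)
  -- split of m•e
  have hsplit : m • e = (m - k) • e + k • e := by
    rw [← add_nsmul]; congr 1; omega
  -- key: x ∉ C + NG G m
  have hxC : x ∉ C + NG G m := by
    rintro ⟨c₁, hc₁, _, ⟨g₁, rfl⟩, rfl⟩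
    obtain ⟨c₂, hc₂, _, ⟨g₂, rfl⟩, hx2⟩ := hx
    -- c₁ + m•g₁ - k•e = c₂ + m•g₂
    have hx2' : c₂ + m • g₂ = (c₁ + m • g₁) - k • e := hx2
    have hke : k • e = (c₁ + m • g₁) - (c₂ + m • g₂) := by rw [hx2']; abel
    set c : G := c₁ - c₂ with hc
    have hcC : c ∈ C := by rw [hc, sub_eq_add_neg]; exact hCadd _ hc₁ _ (hCneg _ hc₂)
    set g : G := g₁ - g₂ with hg
    have key : m • g = k • e - c := by rw [hg, hc, smul_sub, hke]; abel
    have hmg_pos : 0 < m • g := by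
      by_contra h
      push_neg at h
      rw [key] at h
      have hle : k • e ≤ c := sub_nonpos.mp h
      have hke_pos : (0:G) ≤ k • e := by positivity
      exact hkeC (hCconv _ hcC _ hke_pos hle)
    have hg_pos : 0 < g := by
      by_contra h
      push_neg at h
      have h2 : m • g ≤ m • (0:G) := nsmul_le_nsmul_right h m
      rw [smul_zero] at h2
      exact absurd hmg_pos h2.not_gt
    have hg_notC : g ∉ C := by
      intro hgC
      have : m • g ∈ C := nsmul_mem_of_closed hC0 hCadd hgC m
      have : k • e ∈ C := by
        have h2 : k • e = m • g + c := by rw [key]; abel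
        rw [h2]; exact hCadd _ this _ hcC
      exact hkeC this
    -- in both cases (m-k)•e ∈ C, contradiction
    apply hmkeC
    rcases he3 g hg_pos hg_notC with h | h
    · -- g - e ∈ C, so m•(g-e) ∈ C, and (m-k)•e = -(m•(g-e)) - c
      have h1 : m • (g - e) ∈ C := nsmul_mem_of_closed hC0 hCadd h m
      have h2 : (m - k) • e = -(m • (g - e)) + -c := by
        rw [smul_sub, key, hsplit]; abel
      rw [h2]
      exact hCadd _ (hCneg _ h1) _ (hCneg _ hcC)
    · -- e < g : 0 < (m-k)•e < -c
      have h1 : 0 < m • (g - e) := nsmul_pos (sub_pos.mpr h) (by omega)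
      have h2 : m • (g - e) = -c - (m - k) • e := by
        rw [smul_sub, key, hsplit]; abel
      have h3 : (m - k) • e < -c := by rw [h2] at h1; exact sub_pos.mp h1
      have h4 : (0:G) ≤ (m - k) • e := by positivity
      exact hCconv _ (hCneg _ hcC) _ h4 h3.le
  -- now prove equality
  apply Set.Subset.antisymm
  · intro c hc
    right
    exact ⟨C, ⟨⟨hC0, hCadd, hCneg, hCconv⟩, hxC⟩, hc⟩
  · rintro y (hy | hy)
    · simp only [Set.mem_singleton_iff] at hy
      rw [hy]; exact hC0
    · obtain ⟨H, ⟨⟨hH0, hHadd, hHneg, hHconv⟩, hxH⟩, hyH⟩ := hy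
      -- show H ⊆ C
      by_contra hyC
      -- there is h' ∈ H, h' ∉ C, h' > 0
      have : ∃ h' ∈ H, h' ∉ C ∧ 0 < h' := by
        rcases le_or_gt 0 y with hy0 | hy0
        · exact ⟨y, hyH, hyC, lt_of_le_of_ne hy0 (fun h => hyC (h ▸ hC0))⟩
        · refine ⟨-y, hHneg _ hyH, fun h => hyC ?_, neg_pos.mpr hy0⟩
          have := hCneg _ h; simpa using this
      obtain ⟨h', hh'H, hh'C, hh'pos⟩ := this
      -- C ⊆ H
      have hCH : C ⊆ H := by
        intro c hcC
        rcases le_or_gt 0 c with hc0 | hc0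
        · rcases le_or_gt c h' with h | h
          · exact hHconv _ hh'H _ hc0 h
          · exact absurd (hCconv _ hcC _ hh'pos.le h.le) hh'C
        · have hncC : -c ∈ C := hCneg _ hcC
          have : -c ∈ H := by
            rcases le_or_gt (-c) h' with h | h
            · exact hHconv _ hh'H _ (neg_nonneg.mpr hc0.le) h
            · exact absurd (hCconv _ hncC _ hh'pos.le h.le) hh'C
          have := hHneg _ this; simpa using this
      -- e ∈ H
      have heH : e ∈ H := by
        rcases he3 h' hh'pos hh'C with h | h
        · have h1 : h' - e ∈ H := hCH h
          have : h' + -(h' - e) ∈ H := hHadd _ hh'H _ (hHneg _ h1)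
          simpa using this
        · exact hHconv _ hh'H _ he1.le h.le
      -- then x ∈ H + NG G m, contradiction
      apply hxH
      obtain ⟨c₂, hc₂, _, ⟨g₂, rfl⟩, hx2⟩ := hx
      refine ⟨k • e + c₂, hHadd _ (nsmul_mem_of_closed hH0 hHadd heH k) _ (hCH hc₂),
        m • g₂, ⟨g₂, rfl⟩, ?_⟩
      have hx2' : c₂ + m • g₂ = x - k • e := hx2
      show k • e + c₂ + m • g₂ = x
      rw [add_assoc, hx2']; abel
end

section
/- Let G be a linearly ordered abelian group, p a prime, r, s ∈ ℕ with s ≥ r, C ⊆ G a convex subgroup, and x ∈ G. If x ∈ G^{[p^s]}_C + p^rG and x ∉ C + p^rG, then C = H_{p^r,x}. -/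
open Pointwise

lemma convex_subset_of_not_subset {G : Type*} [AddCommGroup G] [LinearOrder G] [IsOrderedAddMonoid G]
    {H C : Set G} (hH : IsConvexSubgroup H) (hC : IsConvexSubgroup C)
    (h : ¬ H ⊆ C) : C ⊆ H := by
  obtain ⟨a, haH, haC⟩ := Set.not_subset.mp h
  have habsH : |a| ∈ H := by
    rcases abs_choice a with h' | h'
    · rw [h']; exact haH
    · rw [h']; exact hH.2.2.1 a haH
  have habsC : |a| ∉ C := by
    intro hmem
    rcases abs_choice a with h' | h'
    · exact haC (h' ▸ hmem)
    · have := hC.2.2.1 _ hmem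
      rw [h', neg_neg] at this
      exact haC this
  intro c hcC
  have habsc : |c| ∈ H := by
    rcases le_total |c| |a| with hle | hle
    · exact hH.2.2.2 _ habsH _ (abs_nonneg c) hle
    · exfalso
      have hcC' : |c| ∈ C := by
        rcases abs_choice c with h' | h'
        · rw [h']; exact hcC
        · rw [h']; exact hC.2.2.1 c hcC
      exact habsC (hC.2.2.2 _ hcC' _ (abs_nonneg a) hle)
  rcases abs_choice c with h' | h'
  · exact h' ▸ habsc
  · have := hH.2.2.1 _ habsc
    rw [h', neg_neg] at this
    exact this

/-- Let `p` be prime, `r, s ∈ ℕ` with `s ≥ r ≥ 1`, `C` a convex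
subgroup, and `x ∈ G`. If `x ∈ G^{[p^s]}_C + p^r G` and `x ∉ C + p^r G`, then
`C = H_{p^r, x}`. -/
theorem eq_Hna_of_mem_Gbr {G : Type*} [AddCommGroup G] [LinearOrder G] [IsOrderedAddMonoid G]
    (p : ℕ) (hp : p.Prime) (r s : ℕ) (hr : 1 ≤ r) (hrs : r ≤ s)
    (C : Set G) (hC : IsConvexSubgroup C) (x : G)
    (h1 : x ∈ Gbr C (p ^ s) + NG G (p ^ r)) (h2 : x ∉ C + NG G (p ^ r)) :
    C = Hna (p ^ r) x := by
  apply Set.Subset.antisymm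
  · intro c hc
    exact Or.inr ⟨C, ⟨hC, h2⟩, hc⟩
  · rintro y (hy | ⟨H, ⟨hH, hxH⟩, hyH⟩)
    · rcases hy with rfl; exact hC.1
    · -- show H ⊆ C
      by_contra hyC
      have hnsub : ¬ H ⊆ C := fun hs => hyC (hs hyH)
      have hCH : C ⊂ H := ⟨convex_subset_of_not_subset hH hC hnsub, hnsub⟩
      apply hxH
      obtain ⟨g, hg, t, ht, hxe⟩ := h1
      have hgH : g ∈ H + NG G (p ^ s) := hg _ ⟨H, hH, hCH, rfl⟩
      obtain ⟨h, hh, u, hu, hge⟩ := hgH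
      obtain ⟨v, hv⟩ := hu
      obtain ⟨w, hw⟩ := ht
      refine ⟨h, hh, p ^ r • (p ^ (s - r) • v + w), ⟨_, rfl⟩, ?_⟩
      show h + p ^ r • (p ^ (s - r) • v + w) = x
      rw [smul_add, smul_smul, ← pow_add, Nat.add_sub_cancel' hrs, hv, hw,
        ← add_assoc]
      rw [show h + u = g from hge]
      exact hxe
end

section
/- Let G be an abelian group, G' ⊆ G a subgroup, ν ∈ ℕ₀, and let H₀, H₁, …, H_ν be subgroups of G and a₀, a₁, …, a_ν ∈ G such that Hᵢ + aᵢ ⊆ H₀ + a₀ for all i ∈ {1, …, ν}, and (Hᵢ + aᵢ) ∩ (Hⱼ + aⱼ) = ∅ for all i, j ∈ {1, …, ν} with i ≠ j. Set X := (H₀ + a₀) ∖ ⋃_{i=1}^{ν}(Hᵢ + aᵢ). Then for every x ∈ G, x ∈ X + G' if and only if both: (1) x − a₀ ∈ H₀ + G', and (2) the sum Σᵢ ((H₀ ∩ G') : (Hᵢ ∩ G'))⁻¹, taken over those i ∈ {1, …, ν} with x − aᵢ ∈ Hᵢ + G', is strictly less than 1; here (A : B) denotes the index of B in A and ∞⁻¹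 is interpreted as 0. -/
open Pointwise
open scoped Classical

private lemma mem_coset_iff {Q : Type*} [AddCommGroup Q] (L : AddSubgroup Q) (d k : Q) :
    k ∈ d +ᵥ (L : Set Q) ↔ k - d ∈ L := by
  rw [Set.mem_vadd_set_iff_neg_vadd_mem]
  simp [sub_eq_neg_add]

private lemma sum_inv_index_lt_one {Q : Type*} [AddCommGroup Q] {ι : Type*} (s : Finset ι)
    (L : ι → AddSubgroup Q) (d : ι → Q)
    (hdisj : ∀ i ∈ s, ∀ j ∈ s, i ≠ j →
      Disjoint (d i +ᵥ (L i : Set Q)) (d j +ᵥ (L j : Set Q)))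
    (y : Q) (hy : ∀ i ∈ s, y ∉ d i +ᵥ (L i : Set Q)) :
    ∑ i ∈ s, ((L i).index : ℚ)⁻¹ < 1 := by
  classical
  set T : Finset ι := s.filter (fun i => (L i).FiniteIndex) with hT
  have hTs : T ⊆ s := Finset.filter_subset _ _
  have hsum_eq : ∑ i ∈ s, ((L i).index : ℚ)⁻¹ = ∑ i ∈ T, ((L i).index : ℚ)⁻¹ := by
    rw [eq_comm]
    apply Finset.sum_subset hTs
    intro i hi hiT
    have : ¬ (L i).FiniteIndex := by
      intro h; exact hiT (Finset.mem_filter.mpr ⟨hi, h⟩)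
    have : (L i).index = 0 := by
      by_contra h; exact this ⟨h⟩
    simp [this]
  rw [hsum_eq]
  set L' : AddSubgroup Q := ⨅ i ∈ T, L i with hL'
  haveI hL'fin : L'.FiniteIndex :=
    AddSubgroup.finiteIndex_iInf' L (fun i hi => (Finset.mem_filter.mp hi).2)
  have hle : ∀ i ∈ T, L' ≤ L i := fun i hi => biInf_le L hi
  haveI : Finite (Q ⧸ L') := AddSubgroup.finite_quotient_of_finiteIndex
  haveI : Fintype (Q ⧸ L') := Fintype.ofFinite _
  set π : Q →+ Q ⧸ L' := QuotientAddGroup.mk' L' with hπ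
  have hπsurj : Function.Surjective π := QuotientAddGroup.mk'_surjective L'
  -- saturation
  have hsat : ∀ i ∈ T, ∀ u v : Q, π u = π v → u ∈ d i +ᵥ (L i : Set Q) →
      v ∈ d i +ᵥ (L i : Set Q) := by
    intro i hi u v huv hu
    rw [mem_coset_iff] at hu ⊢
    have h0 : π (u - v) = 0 := by rw [map_sub, huv, sub_self]
    have huv' : u - v ∈ L' := by
      have := QuotientAddGroup.ker_mk' (G := Q) L'
      rw [← this, AddMonoidHom.mem_ker]
      exact h0
    have : v - d i = (u - d i) - (u - v) := by abel
    rw [this]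
    exact AddSubgroup.sub_mem _ hu (hle i hi huv')
  set B : ι → Finset (Q ⧸ L') := fun i => (π '' (d i +ᵥ (L i : Set Q))).toFinset with hB
  set N := Nat.card (Q ⧸ L') with hN
  have hN0 : 0 < N := Nat.card_pos
  -- card of B i
  have hcard : ∀ i ∈ T, (B i).card * (L i).index = N := by
    intro i hi
    have him : π '' (d i +ᵥ (L i : Set Q)) = (π (d i)) +ᵥ ((L i).map π : Set (Q ⧸ L')) := by
      rw [Set.image_vadd_distrib, AddSubgroup.coe_map]
    have hBcard : (B i).card = Nat.card ((L i).map π) := by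
      rw [hB]
      simp only [Set.toFinset_card]
      rw [← Nat.card_eq_fintype_card, him, Set.natCard_vadd_set]
      rfl
    have hidx : ((L i).map π).index = (L i).index := by
      rw [AddSubgroup.index_map]
      have hker : π.ker = L' := QuotientAddGroup.ker_mk' L'
      rw [hker, sup_of_le_left (hle i hi),
        AddMonoidHom.range_eq_top_of_surjective π hπsurj, AddSubgroup.index_top, mul_one]
    rw [hBcard, ← hidx]
    exact AddSubgroup.card_mul_index _
  -- disjointness of B
  have hBdisj : ∀ i ∈ T, ∀ j ∈ T, i ≠ j → Disjoint (B i) (B j) := by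
    intro i hi j hj hij
    rw [Finset.disjoint_left]
    intro c hci hcj
    rw [hB] at hci hcj
    simp only [Set.mem_toFinset] at hci hcj
    obtain ⟨u, hu, rfl⟩ := hci
    obtain ⟨v, hv, hvu⟩ := hcj
    have : u ∈ d j +ᵥ (L j : Set Q) := hsat j hj v u hvu hv
    exact Set.disjoint_left.mp (hdisj i (hTs hi) j (hTs hj) hij) hu this
  -- π y not in any B i
  have hyB : ∀ i ∈ T, π y ∉ B i := by
    intro i hi hmem
    rw [hB] at hmem
    simp only [Set.mem_toFinset] at hmem
    obtain ⟨u, hu, huy⟩ := hmem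
    exact hy i (hTs hi) (hsat i hi u y huy hu)
  -- sum of cards
  have hsumcard : ∑ i ∈ T, (B i).card ≤ N - 1 := by
    rw [← Finset.card_biUnion (fun i hi j hj hij => hBdisj i hi j hj hij)]
    have hsub : T.biUnion B ⊆ Finset.univ.erase (π y) := by
      intro c hc
      obtain ⟨i, hi, hci⟩ := Finset.mem_biUnion.mp hc
      refine Finset.mem_erase.mpr ⟨?_, Finset.mem_univ _⟩
      rintro rfl; exact hyB i hi hci
    calc (T.biUnion B).card ≤ (Finset.univ.erase (π y)).card := Finset.card_le_card hsub
      _ = N - 1 := by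
          rw [Finset.card_erase_of_mem (Finset.mem_univ _), Finset.card_univ, hN,
            Nat.card_eq_fintype_card]
  -- conclude
  have key : ∀ i ∈ T, ((L i).index : ℚ)⁻¹ = ((B i).card : ℚ) / N := by
    intro i hi
    have h := hcard i hi
    have hidx0 : (L i).index ≠ 0 := (Finset.mem_filter.mp hi).2.index_ne_zero
    have : ((B i).card : ℚ) * ((L i).index : ℚ) = (N : ℚ) := by exact_mod_cast h
    field_simp
    linarith [this]
  rw [Finset.sum_congr rfl key, ← Finset.sum_div]
  rw [div_lt_one (by exact_mod_cast hN0)]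
  calc (∑ i ∈ T, ((B i).card : ℚ)) = ((∑ i ∈ T, (B i).card : ℕ) : ℚ) := by push_cast; ring
    _ ≤ ((N - 1 : ℕ) : ℚ) := by exact_mod_cast hsumcard
    _ < N := by
        have : (N - 1 : ℕ) < N := Nat.sub_lt hN0 one_pos
        exact_mod_cast this

/-- Let `G` be an abelian group, `G'` a subgroup, and
`H₀ + a₀, H₁ + a₁, …, H_ν + a_ν` cosets of subgroups such that `Hᵢ + aᵢ ⊆ H₀ + a₀`
for `i ≥ 1` and the cosets `Hᵢ + aᵢ` (`i ≥ 1`) are pairwise disjoint. Set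
`X = (H₀ + a₀) \ ⋃ᵢ (Hᵢ + aᵢ)`. Then `x ∈ X + G'` iff `x - a₀ ∈ H₀ + G'` and the sum
of `((H₀ ∩ G') : (Hᵢ ∩ G'))⁻¹` over those `i` with `x - aᵢ ∈ Hᵢ + G'` is `< 1`
(indices are in `ℕ ∪ {∞}`, encoded by `AddSubgroup.relindex` with `0 = ∞`, so that
`∞⁻¹ = 0` holds in `ℚ`). -/
theorem mem_diff_add_subgroup_iff {G : Type*} [AddCommGroup G]
    (G' : AddSubgroup G) (ν : ℕ)
    (H₀ : AddSubgroup G) (a₀ : G) (H : Fin ν → AddSubgroup G) (a : Fin ν → G)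
    (hsub : ∀ i, (H i : Set G) + {a i} ⊆ (H₀ : Set G) + {a₀})
    (hdisj : ∀ i j, i ≠ j → ((H i : Set G) + {a i}) ∩ ((H j : Set G) + {a j}) = ∅)
    (x : G) :
    x ∈ (((H₀ : Set G) + {a₀}) \ ⋃ i, ((H i : Set G) + {a i})) + (G' : Set G) ↔
      x - a₀ ∈ (H₀ : Set G) + (G' : Set G) ∧
      (∑ i : Fin ν, if x - a i ∈ (H i : Set G) + (G' : Set G)
          then ((((H i ⊓ G').relIndex (H₀ ⊓ G')) : ℚ))⁻¹ else 0) < 1 := by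

  classical
  have hmemA : ∀ (A : AddSubgroup G) (b y : G), y ∈ (A : Set G) + {b} ↔ y - b ∈ A := by
    intro A b y
    simp only [Set.mem_add, Set.mem_singleton_iff]
    constructor
    · rintro ⟨h, hh, b', rfl, rfl⟩
      simpa using hh
    · intro h
      exact ⟨y - b, h, b, rfl, by abel⟩
  have hmemHG : ∀ (A : AddSubgroup G) (y : G),
      y ∈ (A : Set G) + (G' : Set G) ↔ ∃ g ∈ G', y - g ∈ A := by
    intro A y
    simp only [Set.mem_add, SetLike.mem_coe]
    constructor
    · rintro ⟨h, hh, g, hg, rfl⟩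
      exact ⟨g, hg, by simpa using hh⟩
    · rintro ⟨g, hg, h⟩
      exact ⟨y - g, h, g, hg, by abel⟩
  have ha0 : ∀ i, a i - a₀ ∈ H₀ := by
    intro i
    have := hsub i ((hmemA (H i) (a i) (a i)).mpr (by simpa using (H i).zero_mem))
    exact (hmemA H₀ a₀ (a i)).mp this
  have hHle : ∀ i, H i ≤ H₀ := by
    intro i h hh
    have h1 := hsub i ((hmemA (H i) (a i) (h + a i)).mpr (by simpa using hh))
    rw [hmemA] at h1
    have e : h = (h + a i - a₀) - (a i - a₀) := by abel
    rw [e]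
    exact sub_mem h1 (ha0 i)
  set P : Fin ν → Prop := fun i => x - a i ∈ (H i : Set G) + (G' : Set G) with hP
  have hw : ∀ i, ∃ w : G, P i → (w ∈ G' ∧ x - a i - w ∈ H i) := by
    intro i
    by_cases h : P i
    · obtain ⟨g, hg, hh⟩ := (hmemHG (H i) (x - a i)).mp h
      exact ⟨g, fun _ => ⟨hg, hh⟩⟩
    · exact ⟨0, fun hp => absurd hp h⟩
  choose w hwspec using hw
  set T : Finset (Fin ν) := Finset.univ.filter P with hT
  set L : Fin ν → AddSubgroup ↥(H₀ ⊓ G') := fun i => (H i ⊓ G').addSubgroupOf (H₀ ⊓ G')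
    with hL
  have hsum : ∑ i ∈ T, ((L i).index : ℚ)⁻¹
      = ∑ i : Fin ν, if P i then (((H i ⊓ G').relIndex (H₀ ⊓ G') : ℚ))⁻¹ else 0 :=
    Finset.sum_filter _ _
  have hmemL : ∀ (i : Fin ν) (dd k : ↥(H₀ ⊓ G')),
      k ∈ dd +ᵥ (L i : Set ↥(H₀ ⊓ G')) ↔ (k : G) - (dd : G) ∈ H i ⊓ G' := by
    intro i dd k
    rw [mem_coset_iff, hL, AddSubgroup.mem_addSubgroupOf]
    norm_cast
  constructor
  · intro hx
    rw [Set.mem_add] at hx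
    obtain ⟨yy, hyy, g₀, hg₀, hxeq⟩ := hx
    obtain ⟨hyy1, hyn⟩ := hyy
    have hy0 : yy - a₀ ∈ H₀ := (hmemA H₀ a₀ yy).mp hyy1
    constructor
    · refine (hmemHG H₀ (x - a₀)).mpr ⟨g₀, hg₀, ?_⟩
      have e : x - a₀ - g₀ = yy - a₀ := by rw [← hxeq]; abel
      rw [e]; exact hy0
    · rw [← hsum]
      have hdmem : ∀ i, P i → w i - g₀ ∈ H₀ ⊓ G' := by
        intro i h
        refine AddSubgroup.mem_inf.mpr ⟨?_, sub_mem (hwspec i h).1 hg₀⟩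
        have e : w i - g₀ = (yy - a₀) - (a i - a₀) - (x - a i - w i) := by
          rw [← hxeq]; abel
        rw [e]
        exact sub_mem (sub_mem hy0 (ha0 i)) (hHle i (hwspec i h).2)
      set d : Fin ν → ↥(H₀ ⊓ G') := fun i =>
        if h : P i then (⟨w i - g₀, hdmem i h⟩ : ↥(H₀ ⊓ G')) else 0 with hd
      have hdval : ∀ i ∈ T, (d i : G) = w i - g₀ := by
        intro i hi
        have hPi : P i := (Finset.mem_filter.mp hi).2
        simp [hd, dif_pos hPi]
      apply sum_inv_index_lt_one T L d
      · intro i hi j hj hij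
        have hPi : P i := (Finset.mem_filter.mp hi).2
        have hPj : P j := (Finset.mem_filter.mp hj).2
        rw [Set.disjoint_left]
        intro k hki hkj
        rw [hmemL, hdval i hi] at hki
        rw [hmemL, hdval j hj] at hkj
        have hz1 : x - (g₀ + (k : G)) ∈ (H i : Set G) + {a i} := by
          rw [hmemA]
          have e : x - (g₀ + (k : G)) - a i
              = (x - a i - w i) - ((k : G) - (w i - g₀)) := by abel
          rw [e]
          exact sub_mem (hwspec i hPi).2 (AddSubgroup.mem_inf.mp hki).1
        have hz2 : x - (g₀ + (k : G)) ∈ (H j : Set G) + {a j} := by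
          rw [hmemA]
          have e : x - (g₀ + (k : G)) - a j
              = (x - a j - w j) - ((k : G) - (w j - g₀)) := by abel
          rw [e]
          exact sub_mem (hwspec j hPj).2 (AddSubgroup.mem_inf.mp hkj).1
        exact Set.eq_empty_iff_forall_notMem.mp (hdisj i j hij) _ ⟨hz1, hz2⟩
      · intro i hi h0
        have hPi : P i := (Finset.mem_filter.mp hi).2
        rw [hmemL, hdval i hi] at h0
        apply hyn
        refine Set.mem_iUnion.mpr ⟨i, ?_⟩
        rw [hmemA]
        have e : yy - a i = (x - a i - w i) + (w i - g₀) := by rw [← hxeq]; abel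
        rw [e]
        have hwg : w i - g₀ ∈ H i := by
          have h1 := (AddSubgroup.mem_inf.mp h0).1
          have e2 : w i - g₀ = -(((0 : ↥(H₀ ⊓ G')) : G) - (w i - g₀)) := by
            simp
          rw [e2]
          exact neg_mem h1
        exact add_mem (hwspec i hPi).2 hwg
  · rintro ⟨h1, h2⟩
    by_contra hX
    obtain ⟨g₀, hg₀, hy0⟩ := (hmemHG H₀ (x - a₀)).mp h1
    have hdmem : ∀ i, P i → w i - g₀ ∈ H₀ ⊓ G' := by
      intro i h
      refine AddSubgroup.mem_inf.mpr ⟨?_, sub_mem (hwspec i h).1 hg₀⟩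
      have e : w i - g₀ = (x - a₀ - g₀) - (x - a i - w i) - (a i - a₀) := by abel
      rw [e]
      exact sub_mem (sub_mem hy0 (hHle i (hwspec i h).2)) (ha0 i)
    set d : Fin ν → ↥(H₀ ⊓ G') := fun i =>
      if h : P i then (⟨w i - g₀, hdmem i h⟩ : ↥(H₀ ⊓ G')) else 0 with hd
    have hdval : ∀ i ∈ T, (d i : G) = w i - g₀ := by
      intro i hi
      have hPi : P i := (Finset.mem_filter.mp hi).2
      simp [hd, dif_pos hPi]
    have hcov : ⋃ i ∈ T, (d i) +ᵥ (L i : Set ↥(H₀ ⊓ G')) = Set.univ := by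
      rw [Set.eq_univ_iff_forall]
      intro k
      have hkH : (k : G) ∈ H₀ ⊓ G' := k.2
      have hgG' : g₀ + (k : G) ∈ G' := add_mem hg₀ (AddSubgroup.mem_inf.mp hkH).2
      have hz : x - (g₀ + (k : G)) ∈ (H₀ : Set G) + {a₀} := by
        rw [hmemA]
        have e : x - (g₀ + (k : G)) - a₀ = (x - a₀ - g₀) - (k : G) := by abel
        rw [e]
        exact sub_mem hy0 (AddSubgroup.mem_inf.mp hkH).1
      have hzU : x - (g₀ + (k : G)) ∈ ⋃ i, ((H i : Set G) + {a i}) := by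
        by_contra hn
        apply hX
        rw [Set.mem_add]
        exact ⟨x - (g₀ + (k : G)), ⟨hz, hn⟩, g₀ + (k : G), hgG', by abel⟩
      obtain ⟨i, hzi⟩ := Set.mem_iUnion.mp hzU
      rw [hmemA] at hzi
      have hPi : P i := by
        refine (hmemHG (H i) (x - a i)).mpr ⟨g₀ + (k : G), hgG', ?_⟩
        have e : x - a i - (g₀ + (k : G)) = x - (g₀ + (k : G)) - a i := by abel
        rw [e]
        exact hzi
      have hiT : i ∈ T := Finset.mem_filter.mpr ⟨Finset.mem_univ _, hPi⟩
      refine Set.mem_iUnion₂.mpr ⟨i, hiT, ?_⟩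
      rw [hmemL, hdval i hiT]
      refine AddSubgroup.mem_inf.mpr ⟨?_, ?_⟩
      · have e : (k : G) - (w i - g₀)
            = (x - a i - w i) - (x - (g₀ + (k : G)) - a i) := by abel
        rw [e]
        exact sub_mem (hwspec i hPi).2 hzi
      · exact sub_mem (AddSubgroup.mem_inf.mp hkH).2 (sub_mem (hwspec i hPi).1 hg₀)
    have hge := AddSubgroup.one_le_sum_inv_index_of_leftCoset_cover hcov
    rw [hsum] at hge
    exact absurd h2 (not_lt.mpr hge)
end
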